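/- arXiv:1012.0689 — 5 statements merged into one kernel-verified Lean document; each statement's English description precedes it below -/
import Mathlib

section
/- Let ε ∈ (0,1) and A ≥ 0, and let (Γ_ℓ) be the recursively defined family of functions below. Then there exist constants C > 0 and d ≥ 1 such that |Γ_ℓ(λ)| ≤ C · ℓ^d / (1 + |λ|) for every positive integer ℓ and every λ ∈ ℂ ∖ Ω_ε. -/
lemma auxpow (n L : ℕ) : (L:ℝ)^(n+1) + (n+1)*(L:ℝ)^n ≤ ((L:ℝ)+1)^(n+1) := by
  induction n with
  | zero => simp
  | succ n ih =>
    have hL : (0:ℝ) ≤ (L:ℝ) := Nat.cast_nonneg L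
    have hp : (0:ℝ) ≤ (L:ℝ)^n := by positivity
    have key := mul_le_mul_of_nonneg_left ih (by linarith : (0:ℝ) ≤ (L:ℝ)+1)
    push_cast
    calc (L:ℝ)^(n+1+1) + ((n:ℝ)+1+1)*(L:ℝ)^(n+1)
        ≤ ((L:ℝ)+1) * ((L:ℝ)^(n+1) + ((n:ℝ)+1)*(L:ℝ)^n) := by
          nlinarith [pow_succ (L:ℝ) n, pow_succ (L:ℝ) (n+1), mul_nonneg (Nat.cast_nonneg (α := ℝ) n) hp]
      _ ≤ ((L:ℝ)+1) * ((L:ℝ)+1)^(n+1) := key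
      _ = ((L:ℝ)+1)^(n+1+1) := by ring

lemma sum_pow_le (n L : ℕ) : (∑ j ∈ Finset.range L, (j:ℝ)^n) * (n+1) ≤ (L:ℝ)^(n+1) := by
  induction L with
  | zero => simp
  | succ L ih =>
    rw [Finset.sum_range_succ, add_mul]
    have h := auxpow n L
    push_cast
    nlinarith [ih]

lemma geomR (ε x y r W L : ℝ) (hε0 : 0 < ε) (hε1 : ε < 1) (hL : 1 ≤ L)
    (hW1 : |L + 2*y| ≤ W) (hW2 : |(-2)*x| ≤ W) (hxr : |x| ≤ r) (hyr : |y| ≤ r)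
    (hr : r ≤ |x| + |y|) (hcase : ε*r < |x| ∨ -(1-ε)/2 < y) :
    ε/4*(L+r) ≤ W := by
  have hr0 : (0:ℝ) ≤ r := le_trans (abs_nonneg x) hxr
  have ha0 : (0:ℝ) ≤ |x| := abs_nonneg x
  have hb0 : (0:ℝ) ≤ |y| := abs_nonneg y
  have h1 := abs_le.mp hW1
  have h2 := abs_le.mp hW2
  have hy1 : y ≤ |y| := le_abs_self y
  have hy2 : -y ≤ |y| := neg_le_abs y
  have hx1 : x ≤ |x| := le_abs_self x
  have hW0 : 0 ≤ W := le_trans (abs_nonneg _) hW1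
  have h2' : 2*|x| ≤ W := by
    rcases abs_cases x with ⟨h, _⟩ | ⟨h, _⟩ <;> rw [h] <;> [linarith [h2.1]; linarith [h2.2]]
  rcases hcase with hc | hc
  · rcases le_or_gt (L/2) (L + 2*y) with h | h
    · nlinarith [mul_nonneg hε0.le hr0, mul_nonneg (by linarith : (0:ℝ) ≤ 1-ε) (by linarith : (0:ℝ) ≤ L)]
    · have hrL : L/4 < r := by linarith
      nlinarith [mul_pos hε0 (by linarith : (0:ℝ) < r - L/4), mul_nonneg hε0.le hr0]
  · rcases le_or_gt y 0 with hy | hy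
    · have hbs : |y| < (1-ε)/2 := by rcases abs_cases y with ⟨h, _⟩ | ⟨h, _⟩ <;> linarith
      have hεL : ε*L ≤ L + 2*y := by nlinarith [mul_nonneg (by linarith : (0:ℝ) ≤ 1-ε) (by linarith : (0:ℝ) ≤ L-1)]
      have hWεL : ε*L ≤ W := le_trans hεL h1.2
      nlinarith [mul_le_mul_of_nonneg_left hr hε0.le, mul_nonneg (by linarith : (0:ℝ) ≤ 1-ε) ha0, mul_nonneg hε0.le hb0, mul_nonneg (by linarith : (0:ℝ) ≤ 1-ε) (by linarith : (0:ℝ) ≤ L)]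
    · have hWL : L ≤ W := by linarith [h1.2]
      have hWy : 2*y ≤ W := by linarith [h1.2, hL]
      have hby : |y| = y := abs_of_pos hy
      nlinarith [mul_nonneg (by linarith : (0:ℝ) ≤ 1-ε) (by linarith : (0:ℝ) ≤ L + r)]

def OmegaSet (ε : ℝ) : Set ℂ :=
  {z : ℂ | |z.re| ≤ ε * ‖z‖ ∧ z.im ≤ -(1 - ε) / 2}

/-- Given `ε ∈ (0,1)`, `A ≥ 0`, coefficients `ω` with `|ω_j| ≤ A·j`, and the
recursively defined functions `Γ_ℓ` (with `Γ_0 = 1` and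
`Γ_ℓ(λ) = (ℓ(ℓ - 2iλ))⁻¹ Σ_{j<ℓ} ω_{ℓ-j} Γ_j(λ)` on `ℂ ∖ Ω_ε`), there are
constants `C > 0` and `d ≥ 1` with `|Γ_ℓ(λ)| ≤ C ℓ^d / (1 + |λ|)` for all
`ℓ ≥ 1` and `λ ∈ ℂ ∖ Ω_ε`. -/
theorem stmt1 (ε : ℝ) (hε0 : 0 < ε) (hε1 : ε < 1)
    (A : ℝ) (hA : 0 ≤ A) (ω : ℕ → ℂ)
    (hω : ∀ j : ℕ, 1 ≤ j → ‖ω j‖ ≤ A * j)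
    (Γ : ℕ → ℂ → ℂ)
    (hΓ0 : ∀ z : ℂ, Γ 0 z = 1)
    (hΓ : ∀ ℓ : ℕ, 1 ≤ ℓ → ∀ z : ℂ, z ∉ OmegaSet ε →
      Γ ℓ z = ((ℓ : ℂ) * ((ℓ : ℂ) - 2 * Complex.I * z))⁻¹ *
        ∑ j ∈ Finset.range ℓ, ω (ℓ - j) * Γ j z) :
    ∃ C d : ℝ, 0 < C ∧ 1 ≤ d ∧
      ∀ ℓ : ℕ, 1 ≤ ℓ → ∀ z : ℂ, z ∉ OmegaSet ε →
        ‖Γ ℓ z‖ ≤ C * (ℓ : ℝ) ^ d / (1 + ‖z‖) := by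
  set c : ℝ := ε/4 with hc_def
  have hc : 0 < c := by positivity
  set n : ℕ := ⌈2*A/c⌉₊ + 1 with hn_def
  have hn1 : 1 ≤ n := Nat.le_add_left 1 _
  have hAn : 2*A/c ≤ (n:ℝ) + 1 := by
    have h1 : 2*A/c ≤ (⌈2*A/c⌉₊ : ℝ) := Nat.le_ceil _
    have h2 : ((⌈2*A/c⌉₊ : ℕ) : ℝ) ≤ (n:ℝ) + 1 := by
      rw [hn_def]; push_cast; linarith
    linarith
  set C : ℝ := 2*A/c + 1 with hC_def
  have hC : 0 < C := by positivity
  have hAC : A ≤ c/2*C := by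
    have : c/2*C = A + c/2 := by rw [hC_def]; field_simp
    linarith
  have h2A : 2*A ≤ c*((n:ℝ)+1) := by
    rw [div_le_iff₀ hc] at hAn; linarith
  -- geometric lower bound
  have geom : ∀ ℓ : ℕ, 1 ≤ ℓ → ∀ z : ℂ, z ∉ OmegaSet ε →
      c * ((ℓ:ℝ) + ‖z‖) ≤ ‖(ℓ:ℂ) - 2*Complex.I*z‖ := by
    intro ℓ hℓ z hz
    have hcase : ε * ‖z‖ < |z.re| ∨ -(1-ε)/2 < z.im := by
      by_contra h
      push_neg at h
      exact hz ⟨h.1, by linarith [h.2]⟩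
    have hre : ((ℓ:ℂ) - 2*Complex.I*z).re = (ℓ:ℝ) + 2*z.im := by simp
    have him : ((ℓ:ℂ) - 2*Complex.I*z).im = (-2)*z.re := by simp
    have h1 : |(ℓ:ℝ) + 2*z.im| ≤ ‖(ℓ:ℂ) - 2*Complex.I*z‖ := by
      rw [← hre]; exact Complex.abs_re_le_norm _
    have h2 : |(-2)*z.re| ≤ ‖(ℓ:ℂ) - 2*Complex.I*z‖ := by
      rw [← him]; exact Complex.abs_im_le_norm _
    have hℓR : (1:ℝ) ≤ (ℓ:ℝ) := by exact_mod_cast hℓ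
    have := geomR ε z.re z.im (‖z‖) (‖(ℓ:ℂ) - 2*Complex.I*z‖) (ℓ:ℝ)
      hε0 hε1 hℓR h1 h2 (Complex.abs_re_le_norm z) (Complex.abs_im_le_norm z)
      (Complex.norm_le_abs_re_add_abs_im z) hcase
    rw [hc_def]
    linarith
  -- the key inductive bound
  have key : ∀ ℓ : ℕ, 1 ≤ ℓ → ∀ z : ℂ, z ∉ OmegaSet ε →
      ‖Γ ℓ z‖ ≤ C * (ℓ:ℝ)^n / (1 + ‖z‖) := by
    intro ℓ
    induction ℓ using Nat.strong_induction_on with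
    | _ ℓ IH =>
      intro hℓ z hz
      have hℓR : (1:ℝ) ≤ (ℓ:ℝ) := by exact_mod_cast hℓ
      have hr0 : (0:ℝ) ≤ ‖z‖ := norm_nonneg z
      set r : ℝ := ‖z‖ with hr_def
      set W : ℝ := ‖(ℓ:ℂ) - 2*Complex.I*z‖ with hW_def
      have hW : c * ((ℓ:ℝ) + r) ≤ W := geom ℓ hℓ z hz
      have hWpos : 0 < W := lt_of_lt_of_le (mul_pos hc (by linarith)) hW
      have h1r : (0:ℝ) < 1 + r := by linarith
      have hℓ0 : (0:ℝ) < (ℓ:ℝ) := by linarith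
      set T : ℝ := ∑ j ∈ Finset.range ℓ, (j:ℝ)^n with hT_def
      have hT : T * ((n:ℝ)+1) ≤ (ℓ:ℝ)^(n+1) := by
        have := sum_pow_le n ℓ; push_cast at this ⊢; linarith
      have hT0 : 0 ≤ T := Finset.sum_nonneg fun j _ => by positivity
      -- bound the sum
      have hsum : ‖∑ j ∈ Finset.range ℓ, ω (ℓ - j) * Γ j z‖
          ≤ A*(ℓ:ℝ) + A*(ℓ:ℝ)*C/(1+r) * T := by
        calc ‖∑ j ∈ Finset.range ℓ, ω (ℓ - j) * Γ j z‖
            ≤ ∑ j ∈ Finset.range ℓ, ‖ω (ℓ - j) * Γ j z‖ :=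
              norm_sum_le _ _
          _ ≤ ∑ j ∈ Finset.range ℓ,
                ((if j = 0 then A*(ℓ:ℝ) else 0) + A*(ℓ:ℝ)*C/(1+r)*(j:ℝ)^n) := by
              apply Finset.sum_le_sum
              intro j hj
              have hjℓ : j < ℓ := Finset.mem_range.mp hj
              have hsub : 1 ≤ ℓ - j := by omega
              have hωb : ‖ω (ℓ - j)‖ ≤ A * ((ℓ - j : ℕ) : ℝ) := hω _ hsub
              have hcast : ((ℓ - j : ℕ) : ℝ) ≤ (ℓ:ℝ) := by
                exact_mod_cast Nat.cast_le.mpr (Nat.sub_le ℓ j)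
              have hωb' : ‖ω (ℓ - j)‖ ≤ A * (ℓ:ℝ) :=
                hωb.trans (by nlinarith)
              rcases Nat.eq_zero_or_pos j with hj0 | hj1
              · subst hj0
                rw [hΓ0, mul_one, if_pos rfl]
                have : (0:ℝ) ≤ A*(ℓ:ℝ)*C/(1+r)*((0:ℕ):ℝ)^n := by positivity
                linarith
              · rw [if_neg (by omega), norm_mul]
                have hΓj : ‖Γ j z‖ ≤ C * (j:ℝ)^n / (1 + r) :=
                  IH j hjℓ hj1 z hz
                have h0Γ : 0 ≤ ‖Γ j z‖ := norm_nonneg _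
                calc ‖ω (ℓ - j)‖ * ‖Γ j z‖
                    ≤ (A*(ℓ:ℝ)) * (C * (j:ℝ)^n / (1 + r)) := by
                      apply mul_le_mul hωb' hΓj h0Γ (by positivity)
                  _ = 0 + A*(ℓ:ℝ)*C/(1+r)*(j:ℝ)^n := by ring
          _ = A*(ℓ:ℝ) + A*(ℓ:ℝ)*C/(1+r) * T := by
              rw [Finset.sum_add_distrib, Finset.sum_ite_eq' (Finset.range ℓ) 0
                (fun _ => A*(ℓ:ℝ)), if_pos (Finset.mem_range.mpr (by omega)),
                ← Finset.mul_sum]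
      -- now the recursion
      rw [hΓ ℓ hℓ z hz, norm_mul, norm_inv, norm_mul, Complex.norm_natCast]
      rw [inv_mul_le_iff₀ (by positivity : (0:ℝ) < (ℓ:ℝ) * W)]
      refine hsum.trans ?_
      -- arithmetic
      have hWlow : c/2*(1+r) + c/2*(ℓ:ℝ) ≤ W := by
        nlinarith [mul_nonneg hc.le (show (0:ℝ) ≤ (ℓ:ℝ) + r - 1 by linarith)]
      have hpow : (ℓ:ℝ) ≤ (ℓ:ℝ)^(n+1) := by
        calc (ℓ:ℝ) = (ℓ:ℝ)^1 := (pow_one _).symm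
          _ ≤ (ℓ:ℝ)^(n+1) := pow_le_pow_right₀ hℓR (by omega)
      have hpow0 : (0:ℝ) ≤ (ℓ:ℝ)^(n+1) := by positivity
      have p1 : A*(ℓ:ℝ)*(1+r) ≤ (c/2)*C*(1+r)*(ℓ:ℝ)^(n+1) := by
        have s1 : A*(ℓ:ℝ) ≤ (c/2*C)*(ℓ:ℝ) := mul_le_mul_of_nonneg_right hAC hℓ0.le
        have s2 : (c/2*C)*(ℓ:ℝ) ≤ (c/2*C)*(ℓ:ℝ)^(n+1) :=
          mul_le_mul_of_nonneg_left hpow (by positivity)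
        linarith [mul_le_mul_of_nonneg_right (s1.trans s2) h1r.le]
      have hn1' : (0:ℝ) < (n:ℝ)+1 := by positivity
      have pAT : A*T ≤ c/2*(ℓ:ℝ)^(n+1) := by
        have hTA : A*(T*((n:ℝ)+1)) ≤ A*(ℓ:ℝ)^(n+1) := mul_le_mul_of_nonneg_left hT hA
        have h3 : A*(ℓ:ℝ)^(n+1) ≤ (c/2)*((n:ℝ)+1)*(ℓ:ℝ)^(n+1) := by
          linarith [mul_le_mul_of_nonneg_right h2A hpow0]
        rw [← mul_le_mul_iff_of_pos_right hn1']
        calc A*T*((n:ℝ)+1) = A*(T*((n:ℝ)+1)) := by ring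
          _ ≤ A*(ℓ:ℝ)^(n+1) := hTA
          _ ≤ (c/2)*((n:ℝ)+1)*(ℓ:ℝ)^(n+1) := h3
          _ = c/2*(ℓ:ℝ)^(n+1)*((n:ℝ)+1) := by ring
      have p2 : A*(ℓ:ℝ)*C*T ≤ (c/2)*C*(ℓ:ℝ)*(ℓ:ℝ)^(n+1) := by
        have h4 := mul_le_mul_of_nonneg_right pAT (by positivity : (0:ℝ) ≤ (ℓ:ℝ)*C)
        linarith [h4]
      have main : A*(ℓ:ℝ)*(1+r) + A*(ℓ:ℝ)*C*T ≤ (ℓ:ℝ)*W*(C*(ℓ:ℝ)^n) := by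
        have plow : ((c/2)*(1+r) + (c/2)*(ℓ:ℝ))*(C*(ℓ:ℝ)^(n+1)) ≤ W*(C*(ℓ:ℝ)^(n+1)) :=
          mul_le_mul_of_nonneg_right (by linarith) (by positivity)
        rw [pow_succ] at plow p1 p2
        clear_value T W r c C n
        linarith [plow, p1, p2]
      calc A*(ℓ:ℝ) + A*(ℓ:ℝ)*C/(1+r) * T
          = (A*(ℓ:ℝ)*(1+r) + A*(ℓ:ℝ)*C*T)/(1+r) := by field_simp
        _ ≤ ((ℓ:ℝ)*W*(C*(ℓ:ℝ)^n))/(1+r) := by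
            exact (div_le_div_iff_of_pos_right h1r).mpr main
        _ = (ℓ:ℝ)*W*(C*(ℓ:ℝ)^n/(1+r)) := by ring
  refine ⟨C, (n:ℝ), hC, by exact_mod_cast hn1, ?_⟩
  intro ℓ hℓ z hz
  have := key ℓ hℓ z hz
  rwa [Real.rpow_natCast]
end

section
/- Let ν > −1 and R > 0. Let b : ℝ → ℂ be smooth on ℝ ∖ {0}, vanish outside [−R, R], and satisfy M_ℓ := sup_{λ≠0} |λ|^{ℓ−ν} |b^{(ℓ)}(λ)| < ∞ for every ℓ ∈ ℕ. Let N be the smallest integer strictly greater than ν + 1. Then the integral k(x) = ∫₀^∞ b(λ) e^{iλx} dλ converges absolutely for every x ∈ ℝ, and there exists a constant C ≥ 0, depending only on ν and R, such that |k(x)| ≤ C · |x|^{−ν−1} · Σ_{ℓ=0}^{N} M_ℓ for every x ≠ 0. -/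
open MeasureTheory Set


lemma aux_hasDerivAt {b : ℝ → ℂ} (hb : ContDiffOn ℝ (⊤:ℕ∞) b {(0:ℝ)}ᶜ) (j : ℕ) {l : ℝ}
    (hl : l ≠ 0) : HasDerivAt (iteratedDeriv j b) (iteratedDeriv (j+1) b l) l := by
  have hs : IsOpen ({(0:ℝ)}ᶜ) := isOpen_compl_singleton
  have hmem : {(0:ℝ)}ᶜ ∈ nhds l := hs.mem_nhds hl
  have hdo : DifferentiableOn ℝ (iteratedDerivWithin j b {(0:ℝ)}ᶜ) {(0:ℝ)}ᶜ :=
    hb.differentiableOn_iteratedDerivWithin (by exact_mod_cast WithTop.coe_lt_coe.2 (WithTop.coe_lt_top j))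
      hs.uniqueDiffOn
  have heq : ∀ y ∈ ({(0:ℝ)}ᶜ : Set ℝ), iteratedDerivWithin j b {(0:ℝ)}ᶜ y = iteratedDeriv j b y := by
    intro y hy
    rw [iteratedDerivWithin_eq_iteratedFDerivWithin, iteratedDeriv_eq_iteratedFDeriv,
      iteratedFDerivWithin_of_isOpen j hs hy]
  have hda : DifferentiableAt ℝ (iteratedDeriv j b) l := by
    have := (hdo l hl).differentiableAt hmem
    refine this.congr_of_eventuallyEq ?_
    filter_upwards [hmem] with y hy using (heq y hy).symm
  have := hda.hasDerivAt
  rwa [show deriv (iteratedDeriv j b) l = iteratedDeriv (j+1) b l by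
    rw [iteratedDeriv_succ]] at this

lemma aux_iteratedDeriv_zero (j : ℕ) : iteratedDeriv j (fun _ : ℝ => (0:ℂ)) = fun _ => 0 := by
  induction j with
  | zero => simp
  | succ n ih => rw [iteratedDeriv_succ, ih]; simp

lemma aux_vanish {b : ℝ → ℂ} {R : ℝ} (hR : 0 < R) (hsupp : ∀ l : ℝ, R < |l| → b l = 0)
    (j : ℕ) {l : ℝ} (hl : R < l) : iteratedDeriv j b l = 0 := by
  have h : Set.EqOn b (fun _ => (0:ℂ)) (Ioi R) := fun y hy =>
    hsupp y (lt_of_lt_of_le hy (le_abs_self y))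
  have := h.iteratedDeriv_of_isOpen isOpen_Ioi j hl
  simpa [aux_iteratedDeriv_zero] using this

lemma aux_hasDerivAt_exp {x : ℝ} (hx : x ≠ 0) (l : ℝ) :
    HasDerivAt (fun l : ℝ => Complex.exp (Complex.I * l * x) / (Complex.I * x))
      (Complex.exp (Complex.I * l * x)) l := by
  set c : ℂ := Complex.I * x with hc
  have hc0 : c ≠ 0 := mul_ne_zero Complex.I_ne_zero (by exact_mod_cast hx)
  have h1 : ∀ w : ℂ, HasDerivAt (fun w : ℂ => Complex.exp (c * w) / c) (Complex.exp (c * w)) w := by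
    intro w
    have := (((hasDerivAt_id w).const_mul c).cexp).div_const c
    simpa [mul_one, mul_div_cancel_right₀ _ hc0] using this
  have h2 := (h1 ((l : ℂ))).comp_ofReal
  have he : ∀ y : ℝ, c * (y:ℂ) = Complex.I * y * x := by intro y; rw [hc]; ring
  simpa [he] using h2

lemma aux_abs_exp (l x : ℝ) : ‖Complex.exp (Complex.I * l * x)‖ = 1 := by
  rw [Complex.norm_exp]
  simp

lemma aux_cont {b : ℝ → ℂ} (hb : ContDiffOn ℝ (⊤:ℕ∞) b {(0:ℝ)}ᶜ) (j : ℕ) :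
    ContinuousOn (iteratedDeriv j b) {(0:ℝ)}ᶜ := fun l hl =>
  ((aux_hasDerivAt hb j hl).differentiableAt.continuousAt).continuousWithinAt

lemma aux_ibp {b : ℝ → ℂ} {R : ℝ} (hR : 0 < R) (hb : ContDiffOn ℝ (⊤:ℕ∞) b {(0:ℝ)}ᶜ)
    (hsupp : ∀ l : ℝ, R < |l| → b l = 0) {x δ : ℝ} (hx : x ≠ 0) (hδ : 0 < δ) (hδR : δ ≤ R)
    (j : ℕ) :
    ∫ l in δ..(R+1), iteratedDeriv j b l * Complex.exp (Complex.I * l * x)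
      = -(iteratedDeriv j b δ * (Complex.exp (Complex.I * δ * x) / (Complex.I * x)))
        - (∫ l in δ..(R+1), iteratedDeriv (j+1) b l * Complex.exp (Complex.I * l * x))
            * (Complex.I * x)⁻¹ := by
  have hδT : δ ≤ R + 1 := by linarith
  have hsub : uIcc δ (R+1) ⊆ {(0:ℝ)}ᶜ := by
    rw [uIcc_of_le hδT]
    intro y hy
    exact (ne_of_gt (lt_of_lt_of_le hδ hy.1))
  have hu : ∀ y ∈ uIcc δ (R+1), HasDerivAt (iteratedDeriv j b) (iteratedDeriv (j+1) b y) y :=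
    fun y hy => aux_hasDerivAt hb j (hsub hy)
  have hv : ∀ y ∈ uIcc δ (R+1),
      HasDerivAt (fun l : ℝ => Complex.exp (Complex.I * l * x) / (Complex.I * x))
        (Complex.exp (Complex.I * y * x)) y := fun y _ => aux_hasDerivAt_exp hx y
  have hu' : IntervalIntegrable (iteratedDeriv (j+1) b) volume δ (R+1) :=
    (( aux_cont hb (j+1)).mono hsub).intervalIntegrable
  have hv' : IntervalIntegrable (fun l : ℝ => Complex.exp (Complex.I * l * x)) volume δ (R+1) :=
    (Continuous.intervalIntegrable (by fun_prop) δ (R+1))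
  have := intervalIntegral.integral_mul_deriv_eq_deriv_mul hu hv hu' hv'
  rw [aux_vanish hR hsupp j (by linarith : R < R + 1)] at this
  rw [this]
  rw [show (∫ l in δ..(R+1), iteratedDeriv (j+1) b l *
      (Complex.exp (Complex.I * l * x) / (Complex.I * x)))
    = (∫ l in δ..(R+1), iteratedDeriv (j+1) b l * Complex.exp (Complex.I * l * x))
        * (Complex.I * x)⁻¹ by
    rw [← intervalIntegral.integral_mul_const]
    congr 1; funext l; field_simp]
  ring

lemma aux_key {b : ℝ → ℂ} {R ν : ℝ} (hν : -1 < ν) (hR : 0 < R)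
    (hb : ContDiffOn ℝ (⊤:ℕ∞) b {(0:ℝ)}ᶜ)
    (hsupp : ∀ l : ℝ, R < |l| → b l = 0) {M : ℕ → ℝ}
    (habs : ∀ (ℓ : ℕ) (l : ℝ), l ≠ 0 →
      ‖iteratedDeriv ℓ b l‖ ≤ M ℓ * |l| ^ (ν - (ℓ:ℝ)))
    {N : ℕ} (hN1 : ν + 1 < (N:ℝ))
    {x δ : ℝ} (hx : x ≠ 0) (hδx : δ = |x|⁻¹) (hδR : δ ≤ R)
    {S : ℝ} (hS : ∀ j, j ≤ N → M j ≤ S) (hS0 : 0 ≤ S) :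
    ∀ m : ℕ, ∀ j : ℕ, j + m = N →
      ‖∫ l in δ..(R+1), iteratedDeriv j b l * Complex.exp (Complex.I * l * x)‖
        ≤ δ ^ (ν + 1 - (j:ℝ)) * (((m:ℝ) + ((N:ℝ) - ν - 1)⁻¹) * S) := by
  have hxpos : 0 < |x| := abs_pos.mpr hx
  have hδ : 0 < δ := by rw [hδx]; positivity
  have hδT : δ ≤ R + 1 := by linarith
  have hNν : (0:ℝ) < (N:ℝ) - ν - 1 := by linarith
  intro m
  induction m with
  | zero =>
    intro j hj
    simp only [Nat.add_zero] at hj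
    have hjN : (j:ℝ) = (N:ℝ) := by exact_mod_cast congrArg Nat.cast hj
    have hjν : ν + 1 < (j:ℝ) := by rw [hjN]; exact hN1
    have hjν' : (0:ℝ) < (j:ℝ) - ν - 1 := by linarith
    have hmono : ∀ l ∈ Icc δ (R+1),
        ‖iteratedDeriv j b l * Complex.exp (Complex.I * l * x)‖ ≤ M j * l ^ (ν - (j:ℝ)) := by
      intro l hl
      have hl0 : 0 < l := lt_of_lt_of_le hδ hl.1
      rw [norm_mul, aux_abs_exp, mul_one]
      have := habs j l hl0.ne'
      rwa [abs_of_pos hl0] at this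
    have hint1 : IntervalIntegrable
        (fun l => ‖iteratedDeriv j b l * Complex.exp (Complex.I * l * x)‖) volume δ (R+1) := by
      apply ContinuousOn.intervalIntegrable
      rw [uIcc_of_le hδT]
      apply ContinuousOn.norm
      apply ContinuousOn.mul
      · exact (aux_cont hb j).mono (fun y hy => (lt_of_lt_of_le hδ hy.1).ne')
      · exact Continuous.continuousOn (by fun_prop)
    have hint2 : IntervalIntegrable (fun l : ℝ => M j * l ^ (ν - (j:ℝ))) volume δ (R+1) := by
      apply IntervalIntegrable.const_mul
      apply intervalIntegral.intervalIntegrable_rpow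
      right
      rw [uIcc_of_le hδT]
      intro h; exact absurd h.1 (not_le.mpr hδ)
    have hMN : 0 ≤ M j := le_trans (norm_nonneg _) (by
      simpa [Real.one_rpow] using habs j 1 one_ne_zero)
    have hMNS : M j ≤ S := hS j (le_of_eq hj)
    have h1 : (0:ℝ) ≤ ((R+1):ℝ) ^ (ν - (j:ℝ) + 1) := Real.rpow_nonneg (by linarith) _
    have h2 : (0:ℝ) < δ ^ (ν - (j:ℝ) + 1) := Real.rpow_pos_of_pos hδ _
    calc ‖∫ l in δ..(R+1), iteratedDeriv j b l * Complex.exp (Complex.I * l * x)‖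
        = ‖∫ l in δ..(R+1), iteratedDeriv j b l * Complex.exp (Complex.I * l * x)‖ := rfl
      _ ≤ ∫ l in δ..(R+1), ‖iteratedDeriv j b l * Complex.exp (Complex.I * l * x)‖ :=
          intervalIntegral.norm_integral_le_integral_norm hδT
      _ ≤ ∫ l in δ..(R+1), M j * l ^ (ν - (j:ℝ)) :=
          intervalIntegral.integral_mono_on hδT hint1 hint2 hmono
      _ = M j * ∫ l in δ..(R+1), l ^ (ν - (j:ℝ)) := by
          rw [intervalIntegral.integral_const_mul]
      _ = M j * (((R+1) ^ (ν - (j:ℝ) + 1) - δ ^ (ν - (j:ℝ) + 1)) / (ν - (j:ℝ) + 1)) := by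
          rw [integral_rpow]
          right
          refine ⟨by intro h; linarith, ?_⟩
          rw [uIcc_of_le hδT]; intro h; exact absurd h.1 (not_le.mpr hδ)
      _ = M j * ((δ ^ (ν - (j:ℝ) + 1) - (R+1) ^ (ν - (j:ℝ) + 1)) / ((j:ℝ) - ν - 1)) := by
          congr 1
          rw [div_eq_div_iff (by intro h; linarith : ν - (j:ℝ) + 1 ≠ 0) hjν'.ne']
          ring
      _ = (M j * (δ ^ (ν - (j:ℝ) + 1) - (R+1) ^ (ν - (j:ℝ) + 1))) / ((j:ℝ) - ν - 1) := by
          rw [mul_div_assoc]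
      _ ≤ (S * δ ^ (ν - (j:ℝ) + 1)) / ((j:ℝ) - ν - 1) := by
          have h3 : M j * (δ ^ (ν - (j:ℝ) + 1) - (R+1) ^ (ν - (j:ℝ) + 1)) ≤
              S * δ ^ (ν - (j:ℝ) + 1) := by nlinarith
          exact div_le_div_of_nonneg_right h3 hjν'.le
      _ = δ ^ (ν + 1 - (j:ℝ)) * (((0:ℕ):ℝ) + ((N:ℝ) - ν - 1)⁻¹) * S := by
          rw [show ν - (j:ℝ) + 1 = ν + 1 - (j:ℝ) by ring, hjN, div_eq_mul_inv]
          push_cast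
          ring
      _ = δ ^ (ν + 1 - (j:ℝ)) * ((((0:ℕ):ℝ) + ((N:ℝ) - ν - 1)⁻¹) * S) := by ring
  | succ m ih =>
    intro j hj
    have hj1 : (j+1) + m = N := by omega
    have hIH := ih (j+1) hj1
    have hibp := aux_ibp hR hb hsupp hx hδ hδR j
    have habsδ : ‖iteratedDeriv j b δ‖ ≤ M j * δ ^ (ν - (j:ℝ)) := by
      have := habs j δ hδ.ne'
      rwa [abs_of_pos hδ] at this
    have hexpδ : ‖Complex.exp (Complex.I * δ * x) / (Complex.I * x)‖ = δ := by
      rw [norm_div, aux_abs_exp, norm_mul, Complex.norm_I, Complex.norm_real, Real.norm_eq_abs, one_mul, one_div,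
        hδx]
    have hinvx : ‖(Complex.I * x)⁻¹‖ = δ := by
      rw [norm_inv, norm_mul, Complex.norm_I, Complex.norm_real, Real.norm_eq_abs, one_mul, hδx]
    have hMj : 0 ≤ M j := le_trans (norm_nonneg _) (by
      simpa [Real.one_rpow] using habs j 1 one_ne_zero)
    have hMjS : M j ≤ S := hS j (by omega)
    have hδν : δ ^ (ν + 1 - (j:ℝ)) = δ ^ (ν - (j:ℝ)) * δ := by
      rw [← Real.rpow_add_one hδ.ne']
      ring_nf
    have hδν3 : δ ^ (ν + 1 - ((j:ℝ)+1)) = δ ^ (ν - (j:ℝ)) := by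
      congr 1
      ring
    have hcinv : (0:ℝ) ≤ ((N:ℝ) - ν - 1)⁻¹ := le_of_lt (inv_pos.mpr hNν)
    have h2 : (0:ℝ) < δ ^ (ν - (j:ℝ)) := Real.rpow_pos_of_pos hδ _
    calc ‖∫ l in δ..(R+1), iteratedDeriv j b l * Complex.exp (Complex.I * l * x)‖
        = ‖-(iteratedDeriv j b δ * (Complex.exp (Complex.I * δ * x) / (Complex.I * x)))
            - (∫ l in δ..(R+1), iteratedDeriv (j+1) b l * Complex.exp (Complex.I * l * x))
              * (Complex.I * x)⁻¹‖ := by rw [hibp]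
      _ ≤ ‖iteratedDeriv j b δ * (Complex.exp (Complex.I * δ * x) / (Complex.I * x))‖
          + ‖(∫ l in δ..(R+1), iteratedDeriv (j+1) b l
              * Complex.exp (Complex.I * l * x)) * (Complex.I * x)⁻¹‖ := by
          rw [sub_eq_add_neg]
          refine le_trans (norm_add_le _ _) ?_
          rw [norm_neg, norm_neg]
      _ = ‖iteratedDeriv j b δ‖ * δ
          + ‖∫ l in δ..(R+1), iteratedDeriv (j+1) b l
              * Complex.exp (Complex.I * l * x)‖ * δ := by
          rw [norm_mul, norm_mul, hexpδ, hinvx]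
      _ ≤ (M j * δ ^ (ν - (j:ℝ))) * δ
          + (δ ^ (ν + 1 - ((j:ℝ)+1)) * (((m:ℝ) + ((N:ℝ) - ν - 1)⁻¹) * S)) * δ := by
          have hIH' : ‖∫ l in δ..(R+1), iteratedDeriv (j+1) b l
              * Complex.exp (Complex.I * l * x)‖
              ≤ δ ^ (ν + 1 - ((j:ℝ)+1)) * (((m:ℝ) + ((N:ℝ) - ν - 1)⁻¹) * S) := by
            have := hIH
            push_cast at this
            exact this
          gcongr
      _ = δ ^ (ν + 1 - (j:ℝ)) * M j
          + δ ^ (ν + 1 - (j:ℝ)) * (((m:ℝ) + ((N:ℝ) - ν - 1)⁻¹) * S) := by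
          rw [hδν, hδν3]
          ring
      _ ≤ δ ^ (ν + 1 - (j:ℝ)) * ((((m+1:ℕ)):ℝ) + ((N:ℝ) - ν - 1)⁻¹) * S := by
          push_cast
          rw [hδν]
          have h4 := mul_le_mul_of_nonneg_left hMjS (le_of_lt (mul_pos h2 hδ))
          nlinarith [h4]
      _ = δ ^ (ν + 1 - (j:ℝ)) * (((((m+1:ℕ)):ℝ) + ((N:ℝ) - ν - 1)⁻¹) * S) := by ring

lemma aux_integrable {b : ℝ → ℂ} {R ν M0 : ℝ} (hν : -1 < ν) (hR : 0 < R)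
    (hb : ContDiffOn ℝ (⊤:ℕ∞) b {(0:ℝ)}ᶜ)
    (hsupp : ∀ l : ℝ, R < |l| → b l = 0)
    (hb0 : ∀ l : ℝ, l ≠ 0 → ‖b l‖ ≤ M0 * |l| ^ ν) (x : ℝ) :
    IntegrableOn (fun l : ℝ => b l * Complex.exp (Complex.I * l * x)) (Ioi 0) := by
  have hT : (0:ℝ) ≤ R + 1 := by linarith
  rw [← Ioc_union_Ioi_eq_Ioi hT]
  apply IntegrableOn.union
  · -- on Ioc 0 (R+1)
    have hcont : ContinuousOn (fun l : ℝ => b l * Complex.exp (Complex.I * l * x))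
        (Ioc 0 (R+1)) := by
      apply ContinuousOn.mul
      · exact hb.continuousOn.mono (fun y hy => ne_of_gt hy.1)
      · exact Continuous.continuousOn (by fun_prop)
    have hmeas : AEStronglyMeasurable (fun l : ℝ => b l * Complex.exp (Complex.I * l * x))
        (volume.restrict (Ioc 0 (R+1))) := hcont.aestronglyMeasurable measurableSet_Ioc
    have hg : IntegrableOn (fun l : ℝ => M0 * l ^ ν) (Ioc 0 (R+1)) := by
      have := intervalIntegral.intervalIntegrable_rpow' (a := 0) (b := R+1) hν
      rw [intervalIntegrable_iff_integrableOn_Ioc_of_le hT] at this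
      exact this.const_mul M0
    apply Integrable.mono' hg hmeas
    rw [ae_restrict_iff' measurableSet_Ioc]
    apply ae_of_all
    intro l hl
    rw [norm_mul, aux_abs_exp, mul_one]
    have := hb0 l (ne_of_gt hl.1)
    rwa [abs_of_pos hl.1] at this
  · -- on Ioi (R+1)
    have : EqOn (fun l : ℝ => b l * Complex.exp (Complex.I * l * x)) (fun _ => (0:ℂ))
        (Ioi (R+1)) := by
      intro l hl
      have hl' : R + 1 < l := mem_Ioi.mp hl
      have : b l = 0 := by
        apply hsupp l
        rw [abs_of_pos (by linarith)]
        linarith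
      simp [this]
    exact (integrableOn_zero (ε' := ℂ)).congr_fun this.symm measurableSet_Ioi


/-- Lemma A.1: for a compactly supported homogeneous symbol `b` of order
`ν > -1` (smooth away from `0`, vanishing outside `[-R, R]`, with
`M_ℓ = sup_{λ≠0} |λ|^{ℓ-ν} |b^{(ℓ)}(λ)| < ∞`), the Fourier-type integral
`k(x) = ∫₀^∞ b(λ) e^{iλx} dλ` converges absolutely, and with `N` the smallest
integer `> ν + 1` one has `|k(x)| ≤ C |x|^{-ν-1} Σ_{ℓ=0}^N M_ℓ`, where `C`
depends only on `ν` and `R`. -/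
theorem stmt7 (ν R : ℝ) (hν : -1 < ν) (hR : 0 < R) :
    ∃ C : ℝ, 0 ≤ C ∧
      ∀ (b : ℝ → ℂ) (M : ℕ → ℝ) (N : ℕ),
        ContDiffOn ℝ (⊤ : ℕ∞) b {(0 : ℝ)}ᶜ →
        (∀ l : ℝ, R < |l| → b l = 0) →
        (∀ (ℓ : ℕ) (l : ℝ), l ≠ 0 →
          |l| ^ ((ℓ : ℝ) - ν) * ‖iteratedDeriv ℓ b l‖ ≤ M ℓ) →
        ν + 1 < (N : ℝ) → (N : ℝ) - 1 ≤ ν + 1 →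
        (∀ x : ℝ, IntegrableOn
          (fun l : ℝ => b l * Complex.exp (Complex.I * l * x)) (Ioi 0)) ∧
        ∀ x : ℝ, x ≠ 0 →
          ‖∫ l in Ioi (0 : ℝ), b l * Complex.exp (Complex.I * l * x)‖ ≤
            C * |x| ^ (-ν - 1) * ∑ ℓ ∈ Finset.range (N + 1), M ℓ := by
  have hν1 : (0:ℝ) < ν + 1 := by linarith
  set ε₀ : ℝ := (⌊ν+1⌋ : ℝ) + 1 - (ν + 1) with hε₀def
  have hε₀ : 0 < ε₀ := by
    have := Int.lt_floor_add_one (ν+1)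
    simp only [hε₀def]
    linarith
  set C1 : ℝ := (R+1) ^ (ν+1) / ((ν+1) * R ^ (ν+1)) with hC1def
  set C2 : ℝ := 1/(ν+1) + (ν+2) + ε₀⁻¹ with hC2def
  have hC1 : 0 ≤ C1 := by
    apply div_nonneg (Real.rpow_nonneg (by linarith) _)
    positivity
  have hC2 : 0 ≤ C2 := by
    have h1 : (0:ℝ) ≤ 1/(ν+1) := by positivity
    have h2 : (0:ℝ) ≤ ε₀⁻¹ := by positivity
    simp only [hC2def]
    linarith
  refine ⟨C1 + C2, by linarith, ?_⟩
  intro b M N hb hsupp hM hN1 hN2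
  -- derived pointwise bounds
  have habs : ∀ (ℓ : ℕ) (l : ℝ), l ≠ 0 →
      ‖iteratedDeriv ℓ b l‖ ≤ M ℓ * |l| ^ (ν - (ℓ:ℝ)) := by
    intro ℓ l hl
    have hlpos : 0 < |l| := abs_pos.mpr hl
    have h0 := hM ℓ l hl
    calc ‖iteratedDeriv ℓ b l‖
        = (|l| ^ (ν - (ℓ:ℝ)) * |l| ^ ((ℓ:ℝ) - ν)) * ‖iteratedDeriv ℓ b l‖ := by
          rw [← Real.rpow_add hlpos]
          norm_num
      _ = |l| ^ (ν - (ℓ:ℝ)) * (|l| ^ ((ℓ:ℝ) - ν) * ‖iteratedDeriv ℓ b l‖) := by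
          ring
      _ ≤ |l| ^ (ν - (ℓ:ℝ)) * M ℓ :=
          mul_le_mul_of_nonneg_left h0 (Real.rpow_nonneg hlpos.le _)
      _ = M ℓ * |l| ^ (ν - (ℓ:ℝ)) := by ring
  have hb0 : ∀ l : ℝ, l ≠ 0 → ‖b l‖ ≤ M 0 * |l| ^ ν := by
    intro l hl
    have := habs 0 l hl
    simpa using this
  have hMnn : ∀ ℓ, 0 ≤ M ℓ := by
    intro ℓ
    refine le_trans (norm_nonneg (iteratedDeriv ℓ b 1)) ?_
    have := hM ℓ 1 one_ne_zero
    simpa using this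
  set S : ℝ := ∑ ℓ ∈ Finset.range (N + 1), M ℓ with hSdef
  have hS : ∀ j, j ≤ N → M j ≤ S := by
    intro j hj
    apply Finset.single_le_sum (fun i _ => hMnn i)
    simp [Finset.mem_range]
    omega
  have hS0 : 0 ≤ S := Finset.sum_nonneg (fun i _ => hMnn i)
  have hM0S : M 0 ≤ S := hS 0 (Nat.zero_le N)
  have hT : (0:ℝ) ≤ R + 1 := by linarith
  have hintall : ∀ x : ℝ, IntegrableOn
      (fun l : ℝ => b l * Complex.exp (Complex.I * l * x)) (Ioi 0) :=
    fun x => aux_integrable hν hR hb hsupp hb0 x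
  refine ⟨hintall, ?_⟩
  intro x hx
  have hxpos : 0 < |x| := abs_pos.mpr hx
  set δ : ℝ := |x|⁻¹ with hδdef
  have hδpos : 0 < δ := by positivity
  have hxe : |x| ^ (-ν - 1) = δ ^ (ν+1) := by
    rw [hδdef, Real.inv_rpow (abs_nonneg x), ← Real.rpow_neg (abs_nonneg x)]
    congr 1
    ring
  -- N bounds
  have hNle : (N:ℝ) ≤ ν + 2 := by linarith
  have hNc : (0:ℝ) < (N:ℝ) - ν - 1 := by linarith
  have hfloorN : (⌊ν+1⌋ : ℝ) + 1 ≤ (N:ℝ) := by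
    have h1 : ⌊ν+1⌋ < (N:ℤ) := Int.floor_lt.mpr (by exact_mod_cast hN1)
    have h2 : ⌊ν+1⌋ + 1 ≤ (N:ℤ) := h1
    exact_mod_cast h2
  have hcε : ε₀ ≤ (N:ℝ) - ν - 1 := by simp only [hε₀def]; linarith
  have hinvc : ((N:ℝ) - ν - 1)⁻¹ ≤ ε₀⁻¹ := by
    apply inv_anti₀ hε₀ hcε
  -- reduce integral domain to Ioc 0 (R+1)
  have hint := hintall x
  have h1 : IntegrableOn (fun l : ℝ => b l * Complex.exp (Complex.I * l * x))
      (Ioc 0 (R+1)) := hint.mono_set Ioc_subset_Ioi_self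
  have h2 : IntegrableOn (fun l : ℝ => b l * Complex.exp (Complex.I * l * x))
      (Ioi (R+1)) := hint.mono_set (Ioi_subset_Ioi (by linarith))
  have hzero : ∀ l ∈ Ioi (R+1), b l * Complex.exp (Complex.I * l * x) = 0 := by
    intro l hl
    have hl' : R + 1 < l := mem_Ioi.mp hl
    have : b l = 0 := by
      apply hsupp l
      rw [abs_of_pos (by linarith)]
      linarith
    simp [this]
  have keq : (∫ l in Ioi (0:ℝ), b l * Complex.exp (Complex.I * l * x))
      = ∫ l in Ioc (0:ℝ) (R+1), b l * Complex.exp (Complex.I * l * x) := by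
    rw [← Ioc_union_Ioi_eq_Ioi hT,
      setIntegral_union (Ioc_disjoint_Ioi le_rfl) measurableSet_Ioi h1 h2,
      setIntegral_congr_fun measurableSet_Ioi hzero]
    simp
  -- integrable comparison function
  have hg : IntegrableOn (fun l : ℝ => M 0 * l ^ ν) (Ioc 0 (R+1)) := by
    have := intervalIntegral.intervalIntegrable_rpow' (a := 0) (b := R+1) hν
    rw [intervalIntegrable_iff_integrableOn_Ioc_of_le hT] at this
    exact this.const_mul (M 0)
  have hptwise : ∀ l ∈ Ioc (0:ℝ) (R+1),
      ‖b l * Complex.exp (Complex.I * l * x)‖ ≤ M 0 * l ^ ν := by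
    intro l hl
    rw [norm_mul, aux_abs_exp, mul_one]
    have := hb0 l (ne_of_gt hl.1)
    rwa [abs_of_pos hl.1] at this
  rw [keq]
  by_cases hcase : δ ≤ R
  · -- main case: split at δ
    have hδT : δ ≤ R + 1 := by linarith
    have h1a : IntegrableOn (fun l : ℝ => b l * Complex.exp (Complex.I * l * x))
        (Ioc 0 δ) := h1.mono_set (Ioc_subset_Ioc_right hδT)
    have h1b : IntegrableOn (fun l : ℝ => b l * Complex.exp (Complex.I * l * x))
        (Ioc δ (R+1)) := h1.mono_set (Ioc_subset_Ioc_left hδpos.le)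
    have hsplit : (∫ l in Ioc (0:ℝ) (R+1), b l * Complex.exp (Complex.I * l * x))
        = (∫ l in Ioc (0:ℝ) δ, b l * Complex.exp (Complex.I * l * x))
          + ∫ l in Ioc δ (R+1), b l * Complex.exp (Complex.I * l * x) := by
      rw [← Ioc_union_Ioc_eq_Ioc hδpos.le hδT,
        setIntegral_union (Ioc_disjoint_Ioc_of_le le_rfl) measurableSet_Ioc h1a h1b]
    rw [hsplit]
    have hnear : ‖∫ l in Ioc (0:ℝ) δ, b l * Complex.exp (Complex.I * l * x)‖
        ≤ M 0 * (δ ^ (ν+1) / (ν+1)) := by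
      refine le_trans (norm_integral_le_integral_norm _) ?_
      have hmono := setIntegral_mono_on h1a.norm
        (hg.mono_set (Ioc_subset_Ioc_right hδT))
        measurableSet_Ioc (fun l hl => hptwise l ⟨hl.1, le_trans hl.2 hδT⟩)
      refine le_trans hmono ?_
      rw [integral_const_mul]
      rw [← intervalIntegral.integral_of_le hδpos.le, integral_rpow (Or.inl hν),
        Real.zero_rpow (by linarith : ν + 1 ≠ 0)]
      rw [sub_zero]
    have hfar : ‖∫ l in Ioc δ (R+1), b l * Complex.exp (Complex.I * l * x)‖
        ≤ δ ^ (ν+1) * (((N:ℝ) + ((N:ℝ) - ν - 1)⁻¹) * S) := by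
      rw [← intervalIntegral.integral_of_le hδT]
      have := aux_key hν hR hb hsupp habs hN1 hx hδdef hcase hS hS0 N 0 (by omega)
      simp only [iteratedDeriv_zero, Nat.cast_zero, sub_zero] at this
      exact this
    set P : ℝ := δ ^ (ν+1) with hPdef
    have hP : 0 < P := Real.rpow_pos_of_pos hδpos _
    have g1 : M 0 * (P/(ν+1)) ≤ S * (P/(ν+1)) :=
      mul_le_mul_of_nonneg_right hM0S (by positivity)
    have g2 : P * (((N:ℝ) + ((N:ℝ) - ν - 1)⁻¹)*S) ≤ P * (((ν+2) + ε₀⁻¹)*S) := by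
      apply mul_le_mul_of_nonneg_left _ hP.le
      apply mul_le_mul_of_nonneg_right _ hS0
      linarith
    calc ‖(∫ l in Ioc (0:ℝ) δ, b l * Complex.exp (Complex.I * l * x))
          + ∫ l in Ioc δ (R+1), b l * Complex.exp (Complex.I * l * x)‖
        ≤ ‖∫ l in Ioc (0:ℝ) δ, b l * Complex.exp (Complex.I * l * x)‖
          + ‖∫ l in Ioc δ (R+1), b l * Complex.exp (Complex.I * l * x)‖ := norm_add_le _ _
      _ ≤ M 0 * (P/(ν+1)) + P * (((N:ℝ) + ((N:ℝ) - ν - 1)⁻¹)*S) := add_le_add hnear hfar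
      _ ≤ S * (P/(ν+1)) + P * (((ν+2) + ε₀⁻¹)*S) := add_le_add g1 g2
      _ = C2 * P * S := by simp only [hC2def]; ring
      _ ≤ (C1 + C2) * P * S := by
          apply mul_le_mul_of_nonneg_right _ hS0
          apply mul_le_mul_of_nonneg_right _ hP.le
          linarith
      _ = (C1 + C2) * |x| ^ (-ν - 1) * S := by rw [hxe]
  · -- trivial case: R < δ
    push_neg at hcase
    have htriv : ‖∫ l in Ioc (0:ℝ) (R+1), b l * Complex.exp (Complex.I * l * x)‖
        ≤ M 0 * ((R+1) ^ (ν+1) / (ν+1)) := by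
      refine le_trans (norm_integral_le_integral_norm _) ?_
      have hmono := setIntegral_mono_on h1.norm hg measurableSet_Ioc hptwise
      refine le_trans hmono ?_
      rw [integral_const_mul]
      rw [← intervalIntegral.integral_of_le hT, integral_rpow (Or.inl hν),
        Real.zero_rpow (by linarith : ν + 1 ≠ 0)]
      rw [sub_zero]
    have hRδ : R ^ (ν+1) ≤ δ ^ (ν+1) := Real.rpow_le_rpow hR.le hcase.le (by linarith)
    have hRpos : (0:ℝ) < R ^ (ν+1) := Real.rpow_pos_of_pos hR _
    have e1 : M 0 * ((R+1) ^ (ν+1)/(ν+1)) ≤ S * ((R+1) ^ (ν+1)/(ν+1)) :=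
      mul_le_mul_of_nonneg_right hM0S (by positivity)
    have e2 : S * ((R+1) ^ (ν+1)/(ν+1)) = (C1 * R ^ (ν+1)) * S := by
      simp only [hC1def]
      field_simp
    have e3 : (C1 * R ^ (ν+1)) * S ≤ (C1 * δ ^ (ν+1)) * S :=
      mul_le_mul_of_nonneg_right (mul_le_mul_of_nonneg_left hRδ hC1) hS0
    have e4 : (C1 * δ ^ (ν+1)) * S ≤ ((C1 + C2) * δ ^ (ν+1)) * S := by
      apply mul_le_mul_of_nonneg_right _ hS0
      apply mul_le_mul_of_nonneg_right _ (Real.rpow_pos_of_pos hδpos _).le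
      linarith
    calc ‖∫ l in Ioc (0:ℝ) (R+1), b l * Complex.exp (Complex.I * l * x)‖
        ≤ M 0 * ((R+1) ^ (ν+1) / (ν+1)) := htriv
      _ ≤ S * ((R+1) ^ (ν+1)/(ν+1)) := e1
      _ = (C1 * R ^ (ν+1)) * S := e2
      _ ≤ (C1 * δ ^ (ν+1)) * S := e3
      _ ≤ ((C1 + C2) * δ ^ (ν+1)) * S := e4
      _ = (C1 + C2) * |x| ^ (-ν - 1) * S := by rw [hxe]
end

section
/- Let b : ℝ → ℂ be a smooth function with M_ℓ := sup_{λ∈ℝ} (1+|λ|)^{ℓ+1} |b^{(ℓ)}(λ)| < ∞ for every ℓ ∈ ℕ (i.e. b is an inhomogeneous symbol of order −1), and let k(x) = lim_{T→∞} ∫_{−T}^{T} b(λ) e^{iλx} dλ (which exists for every x ≠ 0). Then there exists a constant C ≥ 0 such that |k(x)| ≤ C · log(1/|x|) · ( sup_{λ∈ℝ} (1+|λ|)|b(λ)| + sup_{λ∈ℝ} (1+|λ|)²|b′(λ)| ) for every x with 0 < |x| < 1/2. -/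
open Filter MeasureTheory Set

namespace Stmt10Aux

noncomputable def fI (b : ℝ → ℂ) (x : ℝ) (l : ℝ) : ℂ :=
  b l * Complex.exp (Complex.I * l * x)

noncomputable def vI (x : ℝ) (l : ℝ) : ℂ :=
  Complex.exp (Complex.I * l * x) / (Complex.I * x)

lemma abs_Ix (x : ℝ) : ‖Complex.I * x‖ = |x| := by
  simp

lemma Ix_ne (x : ℝ) (hx : x ≠ 0) : (Complex.I * x : ℂ) ≠ 0 := by
  simp [Complex.ext_iff, hx]

lemma abs_expI (x l : ℝ) : ‖Complex.exp (Complex.I * l * x)‖ = 1 := by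
  rw [Complex.norm_exp]
  simp [Complex.mul_re, Complex.mul_im]

lemma hasDerivAt_expI (x : ℝ) (l : ℝ) :
    HasDerivAt (fun l : ℝ => Complex.exp (Complex.I * l * x))
      (Complex.I * x * Complex.exp (Complex.I * l * x)) l := by
  have h0 : HasDerivAt (fun l : ℝ => (l : ℂ)) 1 l := by
    simpa using (hasDerivAt_id l).ofReal_comp
  have h1 : HasDerivAt (fun l : ℝ => Complex.I * l * x) (Complex.I * x) l := by
    simpa [mul_comm, mul_assoc, mul_left_comm] using (h0.const_mul Complex.I).mul_const (x : ℂ)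
  simpa [mul_comm] using h1.cexp

lemma hasDerivAt_vI (x : ℝ) (hx : x ≠ 0) (l : ℝ) :
    HasDerivAt (vI x) (Complex.exp (Complex.I * l * x)) l := by
  have h := (hasDerivAt_expI x l).div_const (Complex.I * x)
  have hne := Ix_ne x hx
  unfold vI
  exact h.congr_deriv (mul_div_cancel_left₀ _ hne)

lemma continuous_fI (b : ℝ → ℂ) (hb : Continuous b) (x : ℝ) : Continuous (fI b x) := by
  apply hb.mul
  apply Complex.continuous_exp.comp
  fun_prop

lemma continuous_vI (x : ℝ) : Continuous (vI x) := by
  apply Continuous.div_const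
  apply Complex.continuous_exp.comp
  fun_prop

lemma norm_fI (b : ℝ → ℂ) (x l : ℝ) : ‖fI b x l‖ = ‖b l‖ := by
  rw [fI, norm_mul, abs_expI, mul_one]

lemma norm_vI (x l : ℝ) : ‖vI x l‖ = |x|⁻¹ := by
  rw [vI, norm_div, abs_expI, abs_Ix, one_div]

/-- Integration by parts identity. -/
lemma ibp (b : ℝ → ℂ) (hb : ContDiff ℝ (⊤ : ℕ∞) b) (x : ℝ) (hx : x ≠ 0) (a T : ℝ) :
    ∫ l in a..T, fI b x l
      = b T * vI x T - b a * vI x a - ∫ l in a..T, deriv b l * vI x l := by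
  have hu : ∀ l ∈ uIcc a T, HasDerivAt b (deriv b l) l := fun l _ =>
    ((hb.differentiable (by simp)) l).hasDerivAt
  have hv : ∀ l ∈ uIcc a T, HasDerivAt (vI x) (Complex.exp (Complex.I * l * x)) l := fun l _ =>
    hasDerivAt_vI x hx l
  have hu' : IntervalIntegrable (deriv b) volume a T :=
    (hb.continuous_deriv (by exact_mod_cast le_top)).intervalIntegrable _ _
  have hv' : IntervalIntegrable (fun l : ℝ => Complex.exp (Complex.I * l * x)) volume a T := by
    apply Continuous.intervalIntegrable
    exact Complex.continuous_exp.comp (by fun_prop)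
  exact intervalIntegral.integral_mul_deriv_eq_deriv_mul hu hv hu' hv'

/-- Global integrability of `deriv b * vI`. -/
lemma integrable_dv (b : ℝ → ℂ) (hb : ContDiff ℝ (⊤ : ℕ∞) b) {B : ℝ}
    (hB : ∀ l : ℝ, (1 + |l|) ^ 2 * ‖deriv b l‖ ≤ B) (x : ℝ) (hx : x ≠ 0) :
    Integrable (fun l : ℝ => deriv b l * vI x l) := by
  have hxpos : (0 : ℝ) < |x| := abs_pos.mpr hx
  have hg : Integrable (fun l : ℝ => (B / |x|) * (1 + ‖l‖) ^ (-(2 : ℝ))) := by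
    refine Integrable.const_mul ?_ _
    apply integrable_one_add_norm (E := ℝ)
    norm_num
  refine hg.mono' ?_ (Filter.Eventually.of_forall fun l => ?_)
  · exact ((hb.continuous_deriv (by exact_mod_cast le_top)).mul (continuous_vI x)).aestronglyMeasurable
  · have hpos : (0 : ℝ) < 1 + |l| := by positivity
    have hrw : (1 + ‖l‖ : ℝ) ^ (-(2 : ℝ)) = ((1 + |l|) ^ 2)⁻¹ := by
      rw [Real.norm_eq_abs, Real.rpow_neg (by positivity),
        show ((2 : ℝ)) = ((2 : ℕ) : ℝ) by norm_num, Real.rpow_natCast]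
    rw [norm_mul, norm_vI, hrw]
    have h1 : ‖deriv b l‖ ≤ B / (1 + |l|) ^ 2 := by
      rw [le_div_iff₀ (by positivity)]
      linarith [hB l, mul_comm ((1 + |l|) ^ 2) (‖deriv b l‖)]
    calc ‖deriv b l‖ * |x|⁻¹ ≤ (B / (1 + |l|) ^ 2) * |x|⁻¹ :=
          mul_le_mul_of_nonneg_right h1 (by positivity)
      _ = B / |x| * ((1 + |l|) ^ 2)⁻¹ := by ring

/-- boundary term tends to zero -/
lemma boundary_tendsto (b : ℝ → ℂ) {A : ℝ}
    (hA : ∀ l : ℝ, (1 + |l|) * ‖b l‖ ≤ A) (x : ℝ) (hx : x ≠ 0)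
    (s : ℝ → ℝ) (hs : Tendsto (fun T => |s T|) atTop atTop) :
    Tendsto (fun T : ℝ => b (s T) * vI x (s T)) atTop (nhds 0) := by
  have hxpos : (0 : ℝ) < |x| := abs_pos.mpr hx
  apply squeeze_zero_norm (a := fun T => A / |x| * (1 + |s T|)⁻¹)
  · intro T
    have hpos : (0 : ℝ) < 1 + |s T| := by positivity
    rw [norm_mul, norm_vI]
    have h1 : ‖b (s T)‖ ≤ A / (1 + |s T|) := by
      rw [le_div_iff₀ hpos]
      linarith [hA (s T), mul_comm (1 + |s T|) (‖b (s T)‖)]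
    calc ‖b (s T)‖ * |x|⁻¹ ≤ A / (1 + |s T|) * |x|⁻¹ :=
          mul_le_mul_of_nonneg_right h1 (by positivity)
      _ = A / |x| * (1 + |s T|)⁻¹ := by ring
  · have h2 : Tendsto (fun T : ℝ => (1 + |s T|)⁻¹) atTop (nhds 0) :=
      (tendsto_atTop_add_const_left atTop 1 hs).inv_tendsto_atTop
    simpa using h2.const_mul (A / |x|)

/-- upper tail -/
lemma tendsto_upper (b : ℝ → ℂ) (hb : ContDiff ℝ (⊤ : ℕ∞) b) {A B : ℝ}
    (hA : ∀ l : ℝ, (1 + |l|) * ‖b l‖ ≤ A)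
    (hB : ∀ l : ℝ, (1 + |l|) ^ 2 * ‖deriv b l‖ ≤ B)
    (x : ℝ) (hx : x ≠ 0) (R : ℝ) :
    Tendsto (fun T : ℝ => ∫ l in R..T, fI b x l) atTop
      (nhds (-(b R * vI x R) - ∫ l in Ioi R, deriv b l * vI x l)) := by
  have hint := integrable_dv b hb hB x hx
  have h1 : Tendsto (fun T : ℝ => b T * vI x T) atTop (nhds 0) :=
    boundary_tendsto b hA x hx id (by simpa using tendsto_abs_atTop_atTop)
  have h2 : Tendsto (fun T : ℝ => ∫ l in R..T, deriv b l * vI x l) atTop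
      (nhds (∫ l in Ioi R, deriv b l * vI x l)) :=
    intervalIntegral_tendsto_integral_Ioi R hint.integrableOn tendsto_id
  have h3 := (h1.sub_const (b R * vI x R)).sub h2
  rw [zero_sub] at h3
  apply h3.congr
  intro T
  rw [ibp b hb x hx R T]

/-- lower tail -/
lemma tendsto_lower (b : ℝ → ℂ) (hb : ContDiff ℝ (⊤ : ℕ∞) b) {A B : ℝ}
    (hA : ∀ l : ℝ, (1 + |l|) * ‖b l‖ ≤ A)
    (hB : ∀ l : ℝ, (1 + |l|) ^ 2 * ‖deriv b l‖ ≤ B)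
    (x : ℝ) (hx : x ≠ 0) (R : ℝ) :
    Tendsto (fun T : ℝ => ∫ l in (-T)..(-R), fI b x l) atTop
      (nhds (b (-R) * vI x (-R) - ∫ l in Iic (-R), deriv b l * vI x l)) := by
  have hint := integrable_dv b hb hB x hx
  have h1 : Tendsto (fun T : ℝ => b (-T) * vI x (-T)) atTop (nhds 0) :=
    boundary_tendsto b hA x hx (fun T => -T)
      (by simpa [abs_neg] using tendsto_abs_atTop_atTop)
  have h2 : Tendsto (fun T : ℝ => ∫ l in (-T)..(-R), deriv b l * vI x l) atTop
      (nhds (∫ l in Iic (-R), deriv b l * vI x l)) :=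
    intervalIntegral_tendsto_integral_Iic (-R) hint.integrableOn tendsto_neg_atTop_atBot
  have h3 := ((tendsto_const_nhds (x := b (-R) * vI x (-R))).sub h1).sub h2
  rw [sub_zero] at h3
  apply h3.congr
  intro T
  rw [ibp b hb x hx (-T) (-R)]

/-- Full convergence with explicit limit, split at `R`. -/
lemma conv_main (b : ℝ → ℂ) (hb : ContDiff ℝ (⊤ : ℕ∞) b) {A B : ℝ}
    (hA : ∀ l : ℝ, (1 + |l|) * ‖b l‖ ≤ A)
    (hB : ∀ l : ℝ, (1 + |l|) ^ 2 * ‖deriv b l‖ ≤ B)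
    (x : ℝ) (hx : x ≠ 0) (R : ℝ) :
    Tendsto (fun T : ℝ => ∫ l in (-T)..T, fI b x l) atTop
      (nhds ((b (-R) * vI x (-R) - ∫ l in Iic (-R), deriv b l * vI x l)
        + (∫ l in (-R)..R, fI b x l)
        + (-(b R * vI x R) - ∫ l in Ioi R, deriv b l * vI x l))) := by
  have hf : Continuous (fI b x) := continuous_fI b hb.continuous x
  have h := ((tendsto_lower b hb hA hB x hx R).add
      (tendsto_const_nhds (x := ∫ l in (-R)..R, fI b x l))).add
      (tendsto_upper b hb hA hB x hx R)
  apply h.congr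
  intro T
  rw [intervalIntegral.integral_add_adjacent_intervals (hf.intervalIntegrable _ _)
        (hf.intervalIntegrable _ _),
      intervalIntegral.integral_add_adjacent_intervals (hf.intervalIntegrable _ _)
        (hf.intervalIntegrable _ _)]

lemma integrableOn_sq (R : ℝ) (hR : 0 ≤ R) :
    IntegrableOn (fun l : ℝ => ((1 + l) ^ 2)⁻¹) (Ioi R) := by
  have h : IntegrableOn (fun l : ℝ => (1 + ‖l‖) ^ (-(2 : ℝ))) (Ioi R) :=
    (integrable_one_add_norm (E := ℝ) (by norm_num)).integrableOn
  apply h.congr_fun ?_ measurableSet_Ioi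
  intro l hl
  have hl0 : (0 : ℝ) < l := lt_of_le_of_lt hR hl
  show (1 + ‖l‖ : ℝ) ^ (-(2 : ℝ)) = ((1 + l) ^ 2)⁻¹
  rw [Real.norm_eq_abs, abs_of_pos hl0, Real.rpow_neg (by positivity),
    show ((2 : ℝ)) = ((2 : ℕ) : ℝ) by norm_num, Real.rpow_natCast]

lemma integral_sq (R : ℝ) (hR : 0 ≤ R) :
    ∫ l in Ioi R, ((1 + l) ^ 2)⁻¹ = (1 + R)⁻¹ := by
  have hderiv : ∀ l ∈ Ioi R, HasDerivAt (fun l : ℝ => -(1 + l)⁻¹) (((1 + l) ^ 2)⁻¹) l := by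
    intro l hl
    have hl0 : (0 : ℝ) < 1 + l := by
      have := lt_of_le_of_lt hR hl; linarith
    have h1 : HasDerivAt (fun l : ℝ => 1 + l) 1 l := (hasDerivAt_id l).const_add 1
    have h2 := (h1.inv (ne_of_gt hl0)).neg
    exact h2.congr_deriv (by ring)
  have hcont : ContinuousWithinAt (fun l : ℝ => -(1 + l)⁻¹) (Ici R) R := by
    apply ContinuousAt.continuousWithinAt
    have hne : (1 + R) ≠ 0 := by linarith
    exact ((continuousAt_const.add continuousAt_id).inv₀ hne).neg
  have hlim : Tendsto (fun l : ℝ => -(1 + l)⁻¹) atTop (nhds 0) := by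
    have h1 : Tendsto (fun l : ℝ => 1 + l) atTop atTop :=
      tendsto_atTop_add_const_left atTop 1 tendsto_id
    have h2 : Tendsto (fun l : ℝ => (1 + l)⁻¹) atTop (nhds 0) := h1.inv_tendsto_atTop
    simpa using h2.neg
  have := integral_Ioi_of_hasDerivAt_of_tendsto hcont hderiv (integrableOn_sq R hR) hlim
  rw [this]; ring

/-- bound on a tail set integral over `Ioi R` -/
lemma bound_upper (b : ℝ → ℂ) (hb : ContDiff ℝ (⊤ : ℕ∞) b) {B : ℝ}
    (hB : ∀ l : ℝ, (1 + |l|) ^ 2 * ‖deriv b l‖ ≤ B)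
    (x : ℝ) (hx : x ≠ 0) (R : ℝ) (hR : 0 ≤ R) :
    ‖∫ l in Ioi R, deriv b l * vI x l‖ ≤ B / |x| * (1 + R)⁻¹ := by
  have hxpos : (0 : ℝ) < |x| := abs_pos.mpr hx
  have hint := integrable_dv b hb hB x hx
  calc ‖∫ l in Ioi R, deriv b l * vI x l‖
      ≤ ∫ l in Ioi R, ‖deriv b l * vI x l‖ := norm_integral_le_integral_norm _
    _ ≤ ∫ l in Ioi R, B / |x| * ((1 + l) ^ 2)⁻¹ := by
        apply setIntegral_mono_on hint.norm.integrableOn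
          ((integrableOn_sq R hR).const_mul _) measurableSet_Ioi
        intro l hl
        have hl0 : (0 : ℝ) < l := lt_of_le_of_lt hR hl
        have hpos : (0 : ℝ) < 1 + l := by linarith
        rw [norm_mul, norm_vI]
        have h1 : ‖deriv b l‖ ≤ B / (1 + l) ^ 2 := by
          rw [le_div_iff₀ (by positivity)]
          have h := hB l
          rw [abs_of_pos hl0] at h
          linarith [mul_comm ((1 + l) ^ 2) (‖deriv b l‖)]
        calc ‖deriv b l‖ * |x|⁻¹ ≤ B / (1 + l) ^ 2 * |x|⁻¹ :=
              mul_le_mul_of_nonneg_right h1 (by positivity)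
          _ = B / |x| * ((1 + l) ^ 2)⁻¹ := by ring
    _ = B / |x| * (1 + R)⁻¹ := by
        rw [MeasureTheory.integral_const_mul, integral_sq R hR]

/-- bound on the lower tail set integral -/
lemma bound_lower (b : ℝ → ℂ) (hb : ContDiff ℝ (⊤ : ℕ∞) b) {B : ℝ}
    (hB : ∀ l : ℝ, (1 + |l|) ^ 2 * ‖deriv b l‖ ≤ B)
    (x : ℝ) (hx : x ≠ 0) (R : ℝ) (hR : 0 ≤ R) :
    ‖∫ l in Iic (-R), deriv b l * vI x l‖ ≤ B / |x| * (1 + R)⁻¹ := by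
  have hxpos : (0 : ℝ) < |x| := abs_pos.mpr hx
  have hint := integrable_dv b hb hB x hx
  have hcomp : (∫ l in Iic (-R), deriv b l * vI x l)
      = ∫ l in Ioi R, deriv b (-l) * vI x (-l) := by
    exact (integral_comp_neg_Ioi R fun l => deriv b l * vI x l).symm
  rw [hcomp]
  have hintneg : Integrable (fun l : ℝ => deriv b (-l) * vI x (-l)) := hint.comp_neg
  calc ‖∫ l in Ioi R, deriv b (-l) * vI x (-l)‖
      ≤ ∫ l in Ioi R, ‖deriv b (-l) * vI x (-l)‖ := norm_integral_le_integral_norm _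
    _ ≤ ∫ l in Ioi R, B / |x| * ((1 + l) ^ 2)⁻¹ := by
        apply setIntegral_mono_on hintneg.norm.integrableOn
          ((integrableOn_sq R hR).const_mul _) measurableSet_Ioi
        intro l hl
        have hl0 : (0 : ℝ) < l := lt_of_le_of_lt hR hl
        have hpos : (0 : ℝ) < 1 + l := by linarith
        rw [norm_mul, norm_vI]
        have h1 : ‖deriv b (-l)‖ ≤ B / (1 + l) ^ 2 := by
          rw [le_div_iff₀ (by positivity)]
          have h := hB (-l)
          rw [abs_neg, abs_of_pos hl0] at h
          linarith [mul_comm ((1 + l) ^ 2) (‖deriv b (-l)‖)]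
        calc ‖deriv b (-l)‖ * |x|⁻¹ ≤ B / (1 + l) ^ 2 * |x|⁻¹ :=
              mul_le_mul_of_nonneg_right h1 (by positivity)
          _ = B / |x| * ((1 + l) ^ 2)⁻¹ := by ring
    _ = B / |x| * (1 + R)⁻¹ := by
        rw [MeasureTheory.integral_const_mul, integral_sq R hR]

lemma integral_inv_one_add_right (R : ℝ) (hR : 0 ≤ R) :
    ∫ l in (0 : ℝ)..R, (1 + |l|)⁻¹ = Real.log (1 + R) := by
  have hcongr : EqOn (fun l : ℝ => (1 + |l|)⁻¹) (fun l : ℝ => (1 + l)⁻¹) (uIcc 0 R) := by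
    intro l hl
    rw [uIcc_of_le hR] at hl
    simp only
    rw [abs_of_nonneg hl.1]
  rw [intervalIntegral.integral_congr hcongr]
  have hderiv : ∀ l ∈ uIcc (0 : ℝ) R, HasDerivAt (fun l : ℝ => Real.log (1 + l)) ((1 + l)⁻¹) l := by
    intro l hl
    rw [uIcc_of_le hR] at hl
    have hpos : (0 : ℝ) < 1 + l := by linarith [hl.1]
    have h1 : HasDerivAt (fun l : ℝ => 1 + l) 1 l := (hasDerivAt_id l).const_add 1
    have h2 := h1.log (ne_of_gt hpos)
    simpa using h2
  have hint : IntervalIntegrable (fun l : ℝ => (1 + l)⁻¹) volume 0 R := by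
    apply ContinuousOn.intervalIntegrable
    apply ContinuousOn.inv₀ (continuousOn_const.add continuousOn_id)
    intro l hl
    rw [uIcc_of_le hR] at hl
    have : (0:ℝ) ≤ l := hl.1
    simp only [Pi.add_apply, id]; positivity
  rw [intervalIntegral.integral_eq_sub_of_hasDerivAt hderiv hint]
  simp

lemma integral_inv_one_add_left (R : ℝ) (hR : 0 ≤ R) :
    ∫ l in (-R)..(0 : ℝ), (1 + |l|)⁻¹ = Real.log (1 + R) := by
  have hR' : (-R : ℝ) ≤ 0 := by linarith
  have hcongr : EqOn (fun l : ℝ => (1 + |l|)⁻¹) (fun l : ℝ => (1 - l)⁻¹) (uIcc (-R) 0) := by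
    intro l hl
    rw [uIcc_of_le hR'] at hl
    simp only
    rw [abs_of_nonpos hl.2]
    ring_nf
  rw [intervalIntegral.integral_congr hcongr]
  have hderiv : ∀ l ∈ uIcc (-R) (0 : ℝ),
      HasDerivAt (fun l : ℝ => -Real.log (1 - l)) ((1 - l)⁻¹) l := by
    intro l hl
    rw [uIcc_of_le hR'] at hl
    have hpos : (0 : ℝ) < 1 - l := by linarith [hl.2]
    have h1 : HasDerivAt (fun l : ℝ => 1 - l) (-1) l := (hasDerivAt_id l).const_sub 1
    have h2 := (h1.log (ne_of_gt hpos)).neg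
    exact h2.congr_deriv (by ring)
  have hint : IntervalIntegrable (fun l : ℝ => (1 - l)⁻¹) volume (-R) 0 := by
    apply ContinuousOn.intervalIntegrable
    apply ContinuousOn.inv₀ (continuousOn_const.sub continuousOn_id)
    intro l hl
    rw [uIcc_of_le hR'] at hl
    have h2 : l ≤ 0 := hl.2
    have : (0:ℝ) < 1 - l := by linarith
    positivity
  rw [intervalIntegral.integral_eq_sub_of_hasDerivAt hderiv hint]
  have : (1 : ℝ) - -R = 1 + R := by ring
  simp [this]

/-- bound on the middle interval integral -/
lemma bound_mid (b : ℝ → ℂ) (hb : ContDiff ℝ (⊤ : ℕ∞) b) {A : ℝ}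
    (hA : ∀ l : ℝ, (1 + |l|) * ‖b l‖ ≤ A)
    (x : ℝ) (R : ℝ) (hR : 0 ≤ R) :
    ‖∫ l in (-R)..R, fI b x l‖ ≤ 2 * A * Real.log (1 + R) := by
  have hf : Continuous (fI b x) := continuous_fI b hb.continuous x
  have hginv : Continuous (fun l : ℝ => (1 + |l|)⁻¹) :=
    (continuous_const.add continuous_abs).inv₀ (fun l => by simp only [Pi.add_apply]; positivity)
  have hgcont : Continuous (fun l : ℝ => A * (1 + |l|)⁻¹) := continuous_const.mul hginv
  have step1 : ‖∫ l in (-R)..R, fI b x l‖ ≤ ∫ l in (-R)..R, ‖fI b x l‖ :=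
    intervalIntegral.norm_integral_le_integral_norm (by linarith)
  have step2 : (∫ l in (-R)..R, ‖fI b x l‖) ≤ ∫ l in (-R)..R, A * (1 + |l|)⁻¹ := by
    apply intervalIntegral.integral_mono_on (by linarith)
      (hf.norm.intervalIntegrable _ _) (hgcont.intervalIntegrable _ _)
    intro l _
    rw [norm_fI]
    have hpos : (0 : ℝ) < 1 + |l| := by positivity
    rw [← div_eq_mul_inv, le_div_iff₀ hpos]
    linarith [hA l, mul_comm (1 + |l|) (‖b l‖)]
  have step3 : (∫ l in (-R)..R, A * (1 + |l|)⁻¹) = 2 * A * Real.log (1 + R) := by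
    rw [intervalIntegral.integral_const_mul,
      ← intervalIntegral.integral_add_adjacent_intervals
        (hginv.intervalIntegrable (-R) 0) (hginv.intervalIntegrable 0 R),
      integral_inv_one_add_left R hR, integral_inv_one_add_right R hR]
    ring
  linarith

/-- arithmetic helper -/
lemma div_mul_inv_le (C u w : ℝ) (hC : 0 ≤ C) (hu : 0 < u) (hw : 0 < w) (h : 1 ≤ u * w) :
    C / u * w⁻¹ ≤ C := by
  have heq : C / u * w⁻¹ = C / (u * w) := by
    field_simp
  rw [heq]
  exact div_le_self hC h

/-- boundary term bound -/
lemma boundary_bound (b : ℝ → ℂ) {A : ℝ}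
    (hA : ∀ l : ℝ, (1 + |l|) * ‖b l‖ ≤ A) (x : ℝ) (s : ℝ) :
    ‖b s * vI x s‖ ≤ A / (1 + |s|) * |x|⁻¹ := by
  have hpos : (0 : ℝ) < 1 + |s| := by positivity
  rw [norm_mul, norm_vI]
  have h1 : ‖b s‖ ≤ A / (1 + |s|) := by
    rw [le_div_iff₀ hpos]
    linarith [hA s, mul_comm (1 + |s|) (‖b s‖)]
  exact mul_le_mul_of_nonneg_right h1 (by positivity)

end Stmt10Aux

open Stmt10Aux

/-- Lemma A.2(ii), case `ν = -1` -/
theorem stmt10 (b : ℝ → ℂ) (hb : ContDiff ℝ (⊤ : ℕ∞) b)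
    (hM : ∀ ℓ : ℕ, ∃ M : ℝ, ∀ l : ℝ,
      (1 + |l|) ^ (ℓ + 1) * ‖iteratedDeriv ℓ b l‖ ≤ M) :
    (∀ x : ℝ, x ≠ 0 → ∃ k : ℂ,
      Tendsto (fun T : ℝ => ∫ l in (-T)..T, b l * Complex.exp (Complex.I * l * x))
        atTop (nhds k)) ∧
    ∃ C : ℝ, 0 ≤ C ∧
      ∀ x : ℝ, 0 < |x| → |x| < 1 / 2 → ∀ k : ℂ,
        Tendsto (fun T : ℝ => ∫ l in (-T)..T, b l * Complex.exp (Complex.I * l * x))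
          atTop (nhds k) →
        ‖k‖ ≤ C * Real.log (1 / |x|) *
          ((⨆ l : ℝ, (1 + |l|) * ‖b l‖) +
            (⨆ l : ℝ, (1 + |l|) ^ 2 * ‖deriv b l‖)) := by
  -- extract bounds
  obtain ⟨M₀, hM₀⟩ := hM 0
  obtain ⟨M₁, hM₁⟩ := hM 1
  have hM₀' : ∀ l : ℝ, (1 + |l|) * ‖b l‖ ≤ M₀ := by
    intro l
    have := hM₀ l
    simpa [iteratedDeriv_zero] using this
  have hM₁' : ∀ l : ℝ, (1 + |l|) ^ 2 * ‖deriv b l‖ ≤ M₁ := by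
    intro l
    have := hM₁ l
    simpa [iteratedDeriv_one] using this
  set A : ℝ := ⨆ l : ℝ, (1 + |l|) * ‖b l‖ with hA_def
  set B : ℝ := ⨆ l : ℝ, (1 + |l|) ^ 2 * ‖deriv b l‖ with hB_def
  have hbddA : BddAbove (Set.range fun l : ℝ => (1 + |l|) * ‖b l‖) := by
    refine ⟨M₀, ?_⟩
    rintro y ⟨l, rfl⟩
    exact hM₀' l
  have hbddB : BddAbove (Set.range fun l : ℝ => (1 + |l|) ^ 2 * ‖deriv b l‖) := by
    refine ⟨M₁, ?_⟩
    rintro y ⟨l, rfl⟩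
    exact hM₁' l
  have hA : ∀ l : ℝ, (1 + |l|) * ‖b l‖ ≤ A := fun l => le_ciSup hbddA l
  have hB : ∀ l : ℝ, (1 + |l|) ^ 2 * ‖deriv b l‖ ≤ B := fun l => le_ciSup hbddB l
  have hA0 : 0 ≤ A := le_trans (by positivity) (hA 0)
  have hB0 : 0 ≤ B := le_trans (by positivity) (hB 0)
  constructor
  · intro x hx
    exact ⟨_, conv_main b hb hA hB x hx 0⟩
  · refine ⟨10, by norm_num, ?_⟩
    intro x hxpos hxhalf k hk
    have hx : x ≠ 0 := abs_pos.mp hxpos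
    set R : ℝ := |x|⁻¹ with hR_def
    have hRpos : (0 : ℝ) < R := by positivity
    have hR2 : (2 : ℝ) < R := by
      rw [hR_def]
      have h2 : |x| < 2⁻¹ := by rw [← one_div]; exact hxhalf
      calc (2:ℝ) = (2⁻¹)⁻¹ := by norm_num
        _ < |x|⁻¹ := by exact inv_strictAnti₀ hxpos h2
    have hR0 : (0 : ℝ) ≤ R := le_of_lt hRpos
    have hRx : R * |x| = 1 := inv_mul_cancel₀ (ne_of_gt hxpos)
    -- identify k
    have hk' := conv_main b hb hA hB x hx R
    have hkeq : k = (b (-R) * vI x (-R) - ∫ l in Set.Iic (-R), deriv b l * vI x l)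
        + (∫ l in (-R)..R, fI b x l)
        + (-(b R * vI x R) - ∫ l in Set.Ioi R, deriv b l * vI x l) := by
      refine tendsto_nhds_unique ?_ hk'
      exact hk
    -- bounds
    have hge : (1 : ℝ) ≤ (1 + R) * |x| := by
      have h9 : (1 + R) * |x| = |x| + R * |x| := by ring
      rw [h9, hRx]
      linarith
    have hb1 : ‖b R * vI x R‖ ≤ A := by
      have h := boundary_bound b hA x R
      rw [abs_of_pos hRpos] at h
      exact le_trans h (div_mul_inv_le A (1 + R) |x| hA0 (by linarith) hxpos hge)
    have hb2 : ‖b (-R) * vI x (-R)‖ ≤ A := by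
      have h := boundary_bound b hA x (-R)
      rw [abs_neg, abs_of_pos hRpos] at h
      exact le_trans h (div_mul_inv_le A (1 + R) |x| hA0 (by linarith) hxpos hge)
    have htail : B / |x| * (1 + R)⁻¹ ≤ B := by
      apply div_mul_inv_le B |x| (1 + R) hB0 hxpos (by linarith)
      linarith [hge, mul_comm (1 + R) |x|]
    have ht1 : ‖∫ l in Set.Ioi R, deriv b l * vI x l‖ ≤ B :=
      le_trans (bound_upper b hb hB x hx R hR0) htail
    have ht2 : ‖∫ l in Set.Iic (-R), deriv b l * vI x l‖ ≤ B :=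
      le_trans (bound_lower b hb hB x hx R hR0) htail
    have hmid : ‖∫ l in (-R)..R, fI b x l‖ ≤ 2 * A * Real.log (1 + R) :=
      bound_mid b hb hA x R hR0
    have hnorm : ‖k‖ ≤ 2 * A * Real.log (1 + R) + 2 * A + 2 * B := by
      rw [hkeq]
      calc ‖_ + _ + _‖ ≤ ‖b (-R) * vI x (-R) - ∫ l in Set.Iic (-R), deriv b l * vI x l‖
            + ‖∫ l in (-R)..R, fI b x l‖
            + ‖-(b R * vI x R) - ∫ l in Set.Ioi R, deriv b l * vI x l‖ := by
            exact le_trans (norm_add_le _ _) (by gcongr; exact norm_add_le _ _)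
        _ ≤ (‖b (-R) * vI x (-R)‖ + ‖∫ l in Set.Iic (-R), deriv b l * vI x l‖)
            + ‖∫ l in (-R)..R, fI b x l‖
            + (‖b R * vI x R‖ + ‖∫ l in Set.Ioi R, deriv b l * vI x l‖) := by
            gcongr
            · exact norm_sub_le _ _
            · exact le_trans (norm_sub_le _ _) (by rw [norm_neg])
        _ ≤ (A + B) + 2 * A * Real.log (1 + R) + (A + B) := by
            gcongr
        _ = 2 * A * Real.log (1 + R) + 2 * A + 2 * B := by ring
    -- arithmetic
    have hL_def : Real.log (1 / |x|) = Real.log R := by rw [one_div, hR_def]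
    set L : ℝ := Real.log R with hL
    have hlog2 : Real.log 2 ≤ L := Real.log_le_log (by norm_num) (le_of_lt hR2)
    have hlog2' : (0.6931471803 : ℝ) < Real.log 2 := Real.log_two_gt_d9
    have hLpos : (0.6931471803 : ℝ) < L := lt_of_lt_of_le hlog2' hlog2
    have hlog1R : Real.log (1 + R) ≤ 2 * L := by
      have h1 : Real.log (1 + R) ≤ Real.log (2 * R) := by
        apply Real.log_le_log (by linarith)
        linarith
      rw [Real.log_mul (by norm_num) (ne_of_gt hRpos)] at h1
      linarith
    have hlogpos : 0 ≤ Real.log (1 + R) := Real.log_nonneg (by linarith)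
    rw [hL_def]
    have final : 2 * A * Real.log (1 + R) + 2 * A + 2 * B ≤ 10 * L * (A + B) := by
      nlinarith [mul_le_mul_of_nonneg_left hlog1R hA0, mul_nonneg hA0 (le_of_lt (lt_trans (by norm_num) hLpos)), mul_nonneg hB0 (le_of_lt (lt_trans (by norm_num : (0:ℝ) < 0.6931471803) hLpos))]
    calc ‖k‖ ≤ 2 * A * Real.log (1 + R) + 2 * A + 2 * B := hnorm
      _ ≤ 10 * L * (A + B) := final
end

section
/- For every ζ ∈ ℝ with ζ ≠ 0, every a > 0 and every μ ∈ ℝ with μ ≠ 0, one has | ∫_a^{a + 1/|μ|} λ^{−1−iζ} e^{iμλ} dλ | ≤ 3/|ζ|. -/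
/-- For `ζ ≠ 0`, `a > 0` and `μ ≠ 0`,
`|∫_a^{a+1/|μ|} λ^{-1-iζ} e^{iμλ} dλ| ≤ 3/|ζ|`. -/
theorem stmt14 (ζ : ℝ) (hζ : ζ ≠ 0) (a : ℝ) (ha : 0 < a) (μ : ℝ) (hμ : μ ≠ 0) :
    ‖(∫ l in a..(a + 1 / |μ|),
        (l : ℂ) ^ (-1 - Complex.I * ζ) * Complex.exp (Complex.I * μ * l))‖ ≤
      3 / |ζ| := by
  have hμ0 : (0:ℝ) < |μ| := abs_pos.mpr hμ
  have hμ' : 0 < 1 / |μ| := by positivity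
  set b := a + 1 / |μ| with hb
  have hab : a < b := by rw [hb]; linarith
  have hpos : ∀ l ∈ Set.uIcc a b, 0 < l := by
    intro l hl
    rcases Set.mem_uIcc.mp hl with ⟨h1, _⟩ | ⟨h1, _⟩ <;> linarith
  set c : ℂ := -Complex.I * ζ with hc
  have hslit : ∀ l : ℝ, 0 < l → (l : ℂ) ∈ Complex.slitPlane := fun l hl =>
    Complex.ofReal_mem_slitPlane.2 hl
  have hcpow : ∀ (w : ℂ) (l : ℝ), 0 < l → ContinuousAt (fun y : ℝ => (y : ℂ) ^ w) l := by
    intro w l hl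
    exact (continuousAt_cpow_const (hslit l hl)).comp
      Complex.continuous_ofReal.continuousAt
  have hcexp : Continuous (fun y : ℝ => Complex.exp (Complex.I * μ * y)) := by
    fun_prop
  set f1 : ℝ → ℂ := fun l => (l : ℂ) ^ (-1 - Complex.I * ζ) * Complex.exp (Complex.I * μ * l)
    with hf1
  set f2 : ℝ → ℂ := fun l => (l : ℂ) ^ c * Complex.exp (Complex.I * μ * l) with hf2
  have hcont1 : ContinuousOn f1 (Set.uIcc a b) := fun l hl =>
    (((hcpow _ l (hpos l hl)).mul hcexp.continuousAt)).continuousWithinAt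
  have hcont2 : ContinuousOn f2 (Set.uIcc a b) := fun l hl =>
    (((hcpow _ l (hpos l hl)).mul hcexp.continuousAt)).continuousWithinAt
  have hint1 : IntervalIntegrable f1 MeasureTheory.volume a b := hcont1.intervalIntegrable
  have hint2 : IntervalIntegrable f2 MeasureTheory.volume a b := hcont2.intervalIntegrable
  set g : ℝ → ℂ := fun l => c * f1 l + Complex.I * μ * f2 l with hg
  have hgcont : ContinuousOn g (Set.uIcc a b) :=
    (continuousOn_const.mul hcont1).add (continuousOn_const.mul hcont2)
  have hderiv : ∀ l ∈ Set.uIcc a b, HasDerivAt f2 (g l) l := by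
    intro l hl
    have hl0 : 0 < l := hpos l hl
    have h1 : HasDerivAt (fun y : ℝ => (y : ℂ)) 1 l := by
      exact Complex.ofRealCLM.hasDerivAt (x := l)
    have h2 : HasDerivAt (fun y : ℝ => (y : ℂ) ^ c) (c * (l : ℂ) ^ (c - 1)) l :=
      ((Complex.hasStrictDerivAt_cpow_const (hslit l hl0)).hasDerivAt).comp_ofReal
    have h3 : HasDerivAt (fun y : ℝ => Complex.I * μ * (y : ℂ)) (Complex.I * μ) l := by
      simpa using h1.const_mul (Complex.I * μ)
    have h4 : HasDerivAt (fun y : ℝ => Complex.exp (Complex.I * μ * y))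
        (Complex.exp (Complex.I * μ * l) * (Complex.I * μ)) l := h3.cexp
    have h5 := h2.mul h4
    convert h5 using 1
    · rfl
    · rfl
    have hcm1 : c - 1 = -1 - Complex.I * ζ := by rw [hc]; ring
    rw [hg, hf1, hf2, hcm1]
    ring
  have hFTC : ∫ l in a..b, g l = f2 b - f2 a :=
    intervalIntegral.integral_eq_sub_of_hasDerivAt hderiv hgcont.intervalIntegrable
  have hsplit : ∫ l in a..b, g l
      = c * (∫ l in a..b, f1 l) + Complex.I * μ * (∫ l in a..b, f2 l) := by
    rw [hg]
    rw [intervalIntegral.integral_add (hint1.const_mul c) (hint2.const_mul _)]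
    rw [intervalIntegral.integral_const_mul, intervalIntegral.integral_const_mul]
  have key : c * (∫ l in a..b, f1 l)
      = f2 b - f2 a - Complex.I * μ * (∫ l in a..b, f2 l) := by
    rw [← hFTC, hsplit]; ring
  have habs_pow : ∀ l : ℝ, 0 < l → ‖(l : ℂ) ^ c‖ = 1 := by
    intro l hl
    rw [Complex.norm_cpow_eq_rpow_re_of_pos hl]
    simp [hc]
  have habs_exp : ∀ l : ℝ, ‖Complex.exp (Complex.I * μ * l)‖ = 1 := by
    intro l
    rw [Complex.norm_exp]
    simp
  have habs_f2 : ∀ l ∈ Set.uIcc a b, ‖f2 l‖ = 1 := by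
    intro l hl
    rw [hf2]
    simp only [norm_mul, habs_pow l (hpos l hl), habs_exp l, one_mul]
  have hint2bound : ‖∫ l in a..b, f2 l‖ ≤ 1 / |μ| := by
    have h := intervalIntegral.norm_integral_le_of_norm_le_const
      (C := 1) (f := f2) (a := a) (b := b) ?_
    · calc ‖∫ l in a..b, f2 l‖ ≤ 1 * |b - a| := h
        _ = 1 / |μ| := by
            rw [one_mul, abs_of_pos (by linarith : (0:ℝ) < b - a), hb]; ring
    · intro l hl
      have hl' : l ∈ Set.uIcc a b := Set.uIoc_subset_uIcc hl
      rw [habs_f2 l hl']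
  have habsc : ‖c‖ = |ζ| := by rw [hc]; simp
  have hζ' : 0 < |ζ| := abs_pos.mpr hζ
  have hmain : |ζ| * ‖∫ l in a..b, f1 l‖ ≤ 3 := by
    calc |ζ| * ‖∫ l in a..b, f1 l‖
        = ‖c * (∫ l in a..b, f1 l)‖ := by rw [norm_mul, habsc]
      _ = ‖f2 b - f2 a - Complex.I * μ * (∫ l in a..b, f2 l)‖ := by rw [key]
      _ ≤ ‖f2 b - f2 a‖
          + ‖Complex.I * μ * (∫ l in a..b, f2 l)‖ :=
          norm_sub_le _ _
      _ ≤ (‖f2 b‖ + ‖f2 a‖)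
          + |μ| * ‖∫ l in a..b, f2 l‖ := by
          refine add_le_add (norm_sub_le _ _) ?_
          rw [norm_mul, norm_mul]
          simp
      _ ≤ (1 + 1) + |μ| * (1 / |μ|) := by
          rw [habs_f2 b Set.right_mem_uIcc, habs_f2 a Set.left_mem_uIcc]
          gcongr
      _ = 3 := by
          rw [mul_one_div, div_self (ne_of_gt hμ0)]; norm_num
  rw [le_div_iff₀ hζ']
  linarith [hmain]
end

section
/- There exists a constant C ≥ 0 (C = 3 works) such that for every ζ ∈ ℝ, every μ ∈ ℝ with μ ≠ 0, every b ≥ 1/|μ| and every T ≥ b, one has | ∫_b^T λ^{−1−iζ} e^{iμλ} dλ | ≤ C · (1 + |ζ|) / (|μ| · b). -/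
/-- There is `C ≥ 0` (e.g. `C = 3`) such that for all `ζ ∈ ℝ`, `μ ≠ 0`,
`b ≥ 1/|μ|` and `T ≥ b`, `|∫_b^T λ^{-1-iζ} e^{iμλ} dλ| ≤ C (1+|ζ|)/(|μ| b)`. -/
theorem stmt15 :
    ∃ C : ℝ, 0 ≤ C ∧ ∀ (ζ μ : ℝ), μ ≠ 0 → ∀ b : ℝ, 1 / |μ| ≤ b → ∀ T : ℝ, b ≤ T →
      ‖∫ l in b..T,
          (l : ℂ) ^ (-1 - Complex.I * ζ) * Complex.exp (Complex.I * μ * l)‖ ≤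
        C * (1 + |ζ|) / (|μ| * b) := by
  refine ⟨3, by norm_num, ?_⟩
  intro ζ μ hμ b hb T hT
  have hμ' : (0:ℝ) < |μ| := abs_pos.mpr hμ
  have hb0 : (0:ℝ) < b := lt_of_lt_of_le (by positivity) hb
  have hT0 : (0:ℝ) < T := lt_of_lt_of_le hb0 hT
  set s : ℂ := -1 - Complex.I * ζ with hs
  have hsre : s.re = -1 := by simp [hs]
  have hs1re : (s - 1).re = -2 := by simp [hs]; ring
  have hIμ : (Complex.I * μ) ≠ 0 := by
    simp [Complex.ext_iff, hμ]
  -- derivatives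
  have hpos : ∀ x ∈ Set.uIcc b T, (0:ℝ) < x := by
    intro x hx
    rw [Set.uIcc_of_le hT] at hx
    exact lt_of_lt_of_le hb0 hx.1
  have hu : ∀ x ∈ Set.uIcc b T,
      HasDerivAt (fun t : ℝ => (t : ℂ) ^ s) (s * (x:ℂ) ^ (s - 1)) x := by
    intro x hx
    have h1 : HasDerivAt (fun z : ℂ => z ^ s) (s * (x:ℂ) ^ (s - 1) * 1) (x:ℂ) :=
      (hasDerivAt_id (x:ℂ)).cpow_const (by
        exact Complex.ofReal_mem_slitPlane.mpr (hpos x hx))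
    simpa using h1.comp_ofReal
  have hv : ∀ x ∈ Set.uIcc b T,
      HasDerivAt (fun t : ℝ => Complex.exp (Complex.I * μ * t) / (Complex.I * μ))
        (Complex.exp (Complex.I * μ * x)) x := by
    intro x _
    have h1 : HasDerivAt (fun z : ℂ => Complex.exp (Complex.I * μ * z))
        (Complex.exp (Complex.I * μ * x) * (Complex.I * μ)) (x:ℂ) := by
      simpa using ((hasDerivAt_id (x:ℂ)).const_mul (Complex.I * μ)).cexp
    have h2 := (h1.comp_ofReal).div_const (Complex.I * μ)
    simpa [mul_div_assoc, div_self hIμ] using h2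
  -- integrabilities
  have hcont1 : ContinuousOn (fun x : ℝ => s * (x:ℂ) ^ (s - 1)) (Set.uIcc b T) :=
    continuousOn_const.mul (fun x hx => (Complex.continuousAt_ofReal_cpow_const x (s-1)
      (Or.inr (ne_of_gt (hpos x hx)))).continuousWithinAt)
  have hi1 : IntervalIntegrable (fun x : ℝ => s * (x:ℂ) ^ (s - 1))
      MeasureTheory.volume b T := hcont1.intervalIntegrable
  have hi2 : IntervalIntegrable (fun x : ℝ => Complex.exp (Complex.I * μ * x))
      MeasureTheory.volume b T := by
    apply Continuous.intervalIntegrable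
    exact Complex.continuous_exp.comp (by continuity)
  -- integration by parts
  have hIBP := intervalIntegral.integral_mul_deriv_eq_deriv_mul hu hv hi1 hi2
  rw [hIBP]
  -- abs of boundary terms
  have habs_cpow : ∀ x : ℝ, 0 < x → ‖(x:ℂ) ^ s‖ = x⁻¹ := by
    intro x hx
    rw [Complex.norm_cpow_eq_rpow_re_of_pos hx, hsre]
    rw [Real.rpow_neg_one]
  have habs_exp : ∀ x : ℝ, ‖Complex.exp (Complex.I * μ * x)‖ = 1 := by
    intro x
    rw [Complex.norm_exp]
    norm_num [Complex.mul_re]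
  have habs_Iμ : ‖Complex.I * μ‖ = |μ| := by
    simp
  have hbdry : ∀ x : ℝ, 0 < x →
      ‖(x:ℂ) ^ s * (Complex.exp (Complex.I * μ * x) / (Complex.I * μ))‖
        = x⁻¹ / |μ| := by
    intro x hx
    rw [norm_mul, norm_div, habs_cpow x hx, habs_exp, habs_Iμ]
    ring
  -- abs of the remaining integral
  have hnorm_int : ‖∫ x in b..T, (s * (x:ℂ) ^ (s-1)) *
        (Complex.exp (Complex.I * μ * x) / (Complex.I * μ))‖
      ≤ |∫ x in b..T, (1 + |ζ|) / |μ| * x ^ (-2 : ℤ)| := by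
    apply intervalIntegral.norm_integral_le_abs_of_norm_le
    · filter_upwards [MeasureTheory.ae_restrict_mem measurableSet_Ioc] with x hx
      rw [Set.uIoc_of_le hT] at hx
      have hx0 : (0:ℝ) < x := lt_of_lt_of_le hb0 (le_of_lt hx.1)
      have h1 : ‖(s * (x:ℂ) ^ (s-1)) *
          (Complex.exp (Complex.I * μ * x) / (Complex.I * μ))‖
          = ‖s‖ * x ^ (-2:ℝ) / |μ| := by
        show ‖_‖ = _
        rw [norm_mul, norm_mul, norm_div, habs_exp, habs_Iμ,
          Complex.norm_cpow_eq_rpow_re_of_pos hx0, hs1re]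
        ring
      rw [h1]
      have hzr : (x:ℝ) ^ (-2:ℝ) = x ^ (-2:ℤ) := by
        rw [show ((-2:ℝ)) = ((-2:ℤ):ℝ) by norm_num, Real.rpow_intCast]
      have hsle : ‖s‖ ≤ 1 + |ζ| := by
        calc ‖s‖ ≤ ‖(-1:ℂ)‖ + ‖Complex.I * ζ‖ := by
              rw [hs, sub_eq_add_neg]
              exact (norm_add_le _ _).trans (by simp)
          _ = 1 + |ζ| := by simp
      rw [hzr]
      have hx2 : (0:ℝ) ≤ x ^ (-2:ℤ) := by positivity
      have := mul_le_mul_of_nonneg_right hsle hx2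
      calc ‖s‖ * x ^ (-2:ℤ) / |μ| ≤ (1 + |ζ|) * x ^ (-2:ℤ) / |μ| := by
            gcongr
        _ = (1 + |ζ|) / |μ| * x ^ (-2:ℤ) := by ring
    · apply IntervalIntegrable.const_mul
      exact intervalIntegral.intervalIntegrable_zpow
        (Or.inr (fun h => absurd (hpos 0 h) (lt_irrefl 0)))
  -- value of ∫ x^(-2)
  have hint : ∫ x in b..T, (1 + |ζ|) / |μ| * x ^ (-2:ℤ)
      = (1 + |ζ|) / |μ| * (b⁻¹ - T⁻¹) := by
    rw [intervalIntegral.integral_const_mul,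
      integral_zpow (Or.inr ⟨by norm_num, fun h => absurd (hpos 0 h) (lt_irrefl 0)⟩)]
    congr 1
    norm_num
    ring
  -- put it together
  have hTb : T⁻¹ ≤ b⁻¹ := inv_anti₀ hb0 hT
  have h1 := hbdry T hT0
  have h2 := hbdry b hb0
  have htri : ‖(T:ℂ) ^ s * (Complex.exp (Complex.I * μ * T) / (Complex.I * μ))
        - (b:ℂ) ^ s * (Complex.exp (Complex.I * μ * b) / (Complex.I * μ))
        - ∫ x in b..T, (s * (x:ℂ) ^ (s-1)) *
            (Complex.exp (Complex.I * μ * x) / (Complex.I * μ))‖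
      ≤ T⁻¹ / |μ| + b⁻¹ / |μ| + (1 + |ζ|) / |μ| * (b⁻¹ - T⁻¹) := by
    refine (norm_sub_le _ _).trans ?_
    gcongr
    · refine (norm_sub_le _ _).trans ?_
      rw [h1, h2]
    · calc ‖_‖ ≤ |∫ x in b..T, (1 + |ζ|) / |μ| * x ^ (-2:ℤ)| := hnorm_int
        _ = (1 + |ζ|) / |μ| * (b⁻¹ - T⁻¹) := by
            rw [hint, abs_of_nonneg]
            exact mul_nonneg (by positivity) (sub_nonneg.mpr hTb)
  refine htri.trans ?_
  have hζ : (1:ℝ) ≤ 1 + |ζ| := le_add_of_nonneg_right (abs_nonneg ζ)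
  have hfinal : T⁻¹ / |μ| + b⁻¹ / |μ| + (1 + |ζ|) / |μ| * (b⁻¹ - T⁻¹)
      ≤ 3 * (1 + |ζ|) / (|μ| * b) := by
    have h3 : (1 + |ζ|) / |μ| * (b⁻¹ - T⁻¹) ≤ (1 + |ζ|) / |μ| * b⁻¹ :=
      mul_le_mul_of_nonneg_left (sub_le_self _ (inv_nonneg.mpr hT0.le)) (by positivity)
    have h4 : T⁻¹ / |μ| ≤ (1 + |ζ|) / |μ| * b⁻¹ := by
      rw [div_mul_eq_mul_div]
      refine div_le_div_of_nonneg_right ?_ hμ'.le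
      calc T⁻¹ ≤ b⁻¹ := hTb
        _ = 1 * b⁻¹ := (one_mul _).symm
        _ ≤ (1 + |ζ|) * b⁻¹ := by gcongr
    have h5 : b⁻¹ / |μ| ≤ (1 + |ζ|) / |μ| * b⁻¹ := by
      rw [div_mul_eq_mul_div]
      refine div_le_div_of_nonneg_right ?_ hμ'.le
      nlinarith [abs_nonneg ζ, inv_nonneg.mpr (le_of_lt hb0)]
    calc T⁻¹ / |μ| + b⁻¹ / |μ| + (1 + |ζ|) / |μ| * (b⁻¹ - T⁻¹)
        ≤ (1 + |ζ|) / |μ| * b⁻¹ + (1 + |ζ|) / |μ| * b⁻¹ + (1 + |ζ|) / |μ| * b⁻¹ := by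
          gcongr
      _ = 3 * (1 + |ζ|) / (|μ| * b) := by
          field_simp
          ring
  exact hfinal
end
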